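/- arXiv:1207.5469 — 7 statements merged into one kernel-verified Lean document; each statement's English description precedes it below -/
import Mathlib

section
/- In the incidence graph of a finite projective plane, if a line ℓ contains at least two points of a vertex subset S, then ℓ is resolved by S (i.e., its distance list to S differs from that of any other vertex). -/
open Configuration

variable (P L : Type*) [Membership P L]

/-- The incidence graph of an incidence structure: vertices are points and lines,
with a point adjacent to a line iff it lies on it. -/
def incGraph : SimpleGraph (P ⊕ L) where
  Adj x y := match x, y with
    | .inl p, .inr l => p ∈ l
    | .inr l, .inl p => p ∈ l
    | _, _ => False
  symm := ⟨by rintro (p | l) (p' | l') h <;> simp_all⟩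
  loopless := ⟨by rintro (p | l) h <;> simp_all⟩

/-- A set of vertices is resolving if the ordered distance lists to its elements
distinguish all vertices. -/
def IsResolvingSet (S : Set (P ⊕ L)) : Prop :=
  ∀ x y : P ⊕ L, (∀ s ∈ S, (incGraph P L).dist x s = (incGraph P L).dist y s) → x = y

/-- A vertex `x` is resolved by `S` if no other vertex has the same distance list. -/
def ResolvedBy (S : Set (P ⊕ L)) (x : P ⊕ L) : Prop :=
  ∀ y : P ⊕ L, (∀ s ∈ S, (incGraph P L).dist x s = (incGraph P L).dist y s) → y = x

/-- The metric dimension: the least size of a resolving set. -/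
noncomputable def metricDim : ℕ :=
  sInf {n | ∃ S : Finset (P ⊕ L), S.card = n ∧ IsResolvingSet P L ↑S}

/-- In the incidence graph of a finite projective plane, a line containing
at least two points of a vertex subset S is resolved by S. -/
theorem line_with_two_inner_points_is_resolved
    {P L : Type*} [Membership P L] [ProjectivePlane P L] [Finite P] [Finite L]
    (S : Set (P ⊕ L)) (l : L) (p q : P) (hpq : p ≠ q) (hpl : p ∈ l) (hql : q ∈ l)
    (hpS : Sum.inl p ∈ S) (hqS : Sum.inl q ∈ S) :
    ResolvedBy P L S (Sum.inr l) := by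
  intro y h
  have h1 := h (Sum.inl p) hpS
  have h2 := h (Sum.inl q) hqS
  have dp : (incGraph P L).dist (Sum.inr l) (Sum.inl p) = 1 :=
    (SimpleGraph.dist_eq_one_iff_adj).mpr hpl
  have dq : (incGraph P L).dist (Sum.inr l) (Sum.inl q) = 1 :=
    (SimpleGraph.dist_eq_one_iff_adj).mpr hql
  rw [dp] at h1; rw [dq] at h2
  have ap : (incGraph P L).Adj y (Sum.inl p) :=
    (SimpleGraph.dist_eq_one_iff_adj).mp h1.symm
  have aq : (incGraph P L).Adj y (Sum.inl q) :=
    (SimpleGraph.dist_eq_one_iff_adj).mp h2.symm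
  cases y with
  | inl p' => exact absurd ap (by simp [incGraph])
  | inr l' =>
    have hp' : p ∈ l' := ap
    have hq' : q ∈ l' := aq
    have := Configuration.Nondegenerate.eq_or_eq hpl hql hp' hq'
    rcases this with h | h
    · exact absurd h hpq
    · exact congrArg Sum.inr h.symm
end

section
/- A set S = P_S ∪ L_S of points and lines is a resolving set of the incidence graph of a finite projective plane if and only if: (P1) at most one line outside L_S is skew to P_S; (P1') at most one point outside P_S is covered by no line of L_S; (P2) through every point of P_S there is at most one line outside L_S tangent to P_S; (P2') on every line of L_S there is at most one point outside P_S covered by exactly one line of L_S. -/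
open Configuration

variable (P L : Type*) [Membership P L]

section AuxIncidence
variable {P L : Type*} [Membership P L]

lemma adj_pl {p : P} {l : L} (h : p ∈ l) : (incGraph P L).Adj (.inl p) (.inr l) := h
lemma adj_lp {p : P} {l : L} (h : p ∈ l) : (incGraph P L).Adj (.inr l) (.inl p) := h

lemma not_adj_pp (p q : P) : ¬ (incGraph P L).Adj (.inl p) (.inl q) := fun h => h
lemma not_adj_ll (l m : L) : ¬ (incGraph P L).Adj (.inr l) (.inr m) := fun h => h

lemma adj_isLeft {x y : P ⊕ L} (h : (incGraph P L).Adj x y) : x.isLeft = !y.isLeft := by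
  rcases x with p | l <;> rcases y with q | m <;> simp_all [incGraph]

lemma walk_parity {x y : P ⊕ L} (w : (incGraph P L).Walk x y) :
    Even w.length ↔ (x.isLeft = y.isLeft) := by
  induction w with
  | nil => simp
  | @cons a b c h w ih =>
    have hab := adj_isLeft h
    rw [SimpleGraph.Walk.length_cons, Nat.even_add_one, ih, hab]
    cases b.isLeft <;> cases c.isLeft <;> simp

variable [ProjectivePlane P L]
set_option linter.unusedSectionVars false

lemma exists_mem_line (l : L) : ∃ p : P, p ∈ l := by
  obtain ⟨p₁, p₂, p₃, l₁, l₂, l₃, h₁₂, h₁₃, h₂₁, h₂₂, h₂₃, h₃₁, h₃₂, h₃₃⟩ :=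
    ProjectivePlane.exists_config (P := P) (L := L)
  by_cases h : l = l₂
  · exact ⟨p₂, h ▸ h₂₂⟩
  · exact ⟨HasPoints.mkPoint h, (HasPoints.mkPoint_ax h).1⟩

lemma exists_mem_point (p : P) : ∃ l : L, p ∈ l := by
  obtain ⟨p₁, p₂, p₃, l₁, l₂, l₃, h₁₂, h₁₃, h₂₁, h₂₂, h₂₃, h₃₁, h₃₂, h₃₃⟩ :=
    ProjectivePlane.exists_config (P := P) (L := L)
  by_cases h : p = p₂
  · exact ⟨l₂, h ▸ h₂₂⟩
  · exact ⟨HasLines.mkLine h, (HasLines.mkLine_ax h).1⟩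


lemma dist_pl_mem {p : P} {l : L} (h : p ∈ l) :
    (incGraph P L).dist (.inl p) (.inr l) = 1 :=
  SimpleGraph.dist_eq_one_iff_adj.mpr (adj_pl h)

lemma dist_pp {p q : P} (h : p ≠ q) :
    (incGraph P L).dist (.inl p) (.inl q) = 2 := by
  have hl := HasLines.mkLine_ax (P := P) (L := L) h
  have w : (incGraph P L).Walk (.inl p) (.inl q) :=
    .cons (adj_pl hl.1) (.cons (adj_lp hl.2) .nil)
  have hle : (incGraph P L).dist (.inl p) (.inl q) ≤ 2 := by
    simpa using SimpleGraph.dist_le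
      (.cons (adj_pl hl.1) (.cons (adj_lp hl.2) .nil) : (incGraph P L).Walk (.inl p) (.inl q))
  have h0 : (incGraph P L).dist (.inl p) (.inl q) ≠ 0 := by
    rw [Ne, w.reachable.dist_eq_zero_iff]
    simp [h]
  have h1 : (incGraph P L).dist (.inl p) (.inl q) ≠ 1 := by
    rw [Ne, SimpleGraph.dist_eq_one_iff_adj]
    exact not_adj_pp p q
  omega

lemma dist_ll {l m : L} (h : l ≠ m) :
    (incGraph P L).dist (.inr l) (.inr m) = 2 := by
  have hp := HasPoints.mkPoint_ax (P := P) (L := L) h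
  have w : (incGraph P L).Walk (.inr l) (.inr m) :=
    .cons (adj_lp hp.1) (.cons (adj_pl hp.2) .nil)
  have hle : (incGraph P L).dist (.inr l) (.inr m) ≤ 2 := by
    simpa using SimpleGraph.dist_le
      (.cons (adj_lp hp.1) (.cons (adj_pl hp.2) .nil) : (incGraph P L).Walk (.inr l) (.inr m))
  have h0 : (incGraph P L).dist (.inr l) (.inr m) ≠ 0 := by
    rw [Ne, w.reachable.dist_eq_zero_iff]
    simp [h]
  have h1 : (incGraph P L).dist (.inr l) (.inr m) ≠ 1 := by
    rw [Ne, SimpleGraph.dist_eq_one_iff_adj]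
    exact not_adj_ll l m
  omega

lemma dist_pl_not_mem {p : P} {l : L} (h : p ∉ l) :
    (incGraph P L).dist (.inl p) (.inr l) = 3 := by
  obtain ⟨q, hq⟩ := exists_mem_line (P := P) l
  have hpq : p ≠ q := fun e => h (e ▸ hq)
  have hn := HasLines.mkLine_ax (P := P) (L := L) hpq
  have w : (incGraph P L).Walk (.inl p) (.inr l) :=
    .cons (adj_pl hn.1) (.cons (adj_lp hn.2) (.cons (adj_pl hq) .nil))
  have hle : (incGraph P L).dist (.inl p) (.inr l) ≤ 3 := by
    simpa using SimpleGraph.dist_le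
      (.cons (adj_pl hn.1) (.cons (adj_lp hn.2) (.cons (adj_pl hq) .nil)) :
        (incGraph P L).Walk (.inl p) (.inr l))
  have h1 : (incGraph P L).dist (.inl p) (.inr l) ≠ 1 := by
    rw [Ne, SimpleGraph.dist_eq_one_iff_adj]
    exact fun hadj => h hadj
  have hodd : ¬ Even ((incGraph P L).dist (.inl p) (.inr l)) := by
    obtain ⟨w', hw'⟩ := w.reachable.exists_walk_length_eq_dist
    rw [← hw', walk_parity]
    simp
  rw [Nat.even_iff] at hodd
  have h0 : (incGraph P L).dist (.inl p) (.inr l) ≠ 0 := by omega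
  omega

lemma dist_lp_mem {p : P} {l : L} (h : p ∈ l) :
    (incGraph P L).dist (.inr l) (.inl p) = 1 := by
  rw [SimpleGraph.dist_comm]; exact dist_pl_mem h

lemma dist_lp_not_mem {p : P} {l : L} (h : p ∉ l) :
    (incGraph P L).dist (.inr l) (.inl p) = 3 := by
  rw [SimpleGraph.dist_comm]; exact dist_pl_not_mem h


lemma exists_two_lines (P L : Type*) [Membership P L] [ProjectivePlane P L] :
    ∃ l m : L, l ≠ m := by
  obtain ⟨p₁, p₂, p₃, l₁, l₂, l₃, h₁₂, h₁₃, h₂₁, h₂₂, h₂₃, h₃₁, h₃₂, h₃₃⟩ :=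
    ProjectivePlane.exists_config (P := P) (L := L)
  exact ⟨l₂, l₃, fun h => h₃₃ (h ▸ h₃₂)⟩

end AuxIncidence

/-- characterization of resolving sets of a finite projective plane by the
properties P1, P1', P2, P2'. -/
theorem isResolvingSet_iff_P1_P1'_P2_P2'
    {P L : Type*} [Membership P L] [ProjectivePlane P L] [Finite P] [Finite L]
    (S : Set (P ⊕ L)) :
    IsResolvingSet P L S ↔
      -- P1: at most one line outside L_S skew to P_S
      ({l : L | Sum.inr l ∉ S ∧ ∀ p : P, Sum.inl p ∈ S → p ∉ l}).Subsingleton ∧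
      -- P1': at most one point outside P_S covered by no line of L_S
      ({p : P | Sum.inl p ∉ S ∧ ∀ l : L, Sum.inr l ∈ S → p ∉ l}).Subsingleton ∧
      -- P2: through every inner point at most one outer line tangent to P_S
      (∀ p : P, Sum.inl p ∈ S →
        ({l : L | Sum.inr l ∉ S ∧ p ∈ l ∧
          ({x : P | Sum.inl x ∈ S ∧ x ∈ l}).ncard = 1}).Subsingleton) ∧
      -- P2': on every inner line at most one outer point 1-covered by L_S
      (∀ l : L, Sum.inr l ∈ S →
        ({p : P | Sum.inl p ∉ S ∧ p ∈ l ∧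
          ({m : L | Sum.inr m ∈ S ∧ p ∈ m}).ncard = 1}).Subsingleton) := by
  classical
  constructor
  · intro hres
    refine ⟨?_, ?_, ?_, ?_⟩
    · -- P1
      rintro l ⟨hl, hlskew⟩ m ⟨hm, hmskew⟩
      have := hres (.inr l) (.inr m) ?_
      · exact Sum.inr.inj this
      rintro (q | n) hs
      · rw [dist_lp_not_mem (hlskew q hs), dist_lp_not_mem (hmskew q hs)]
      · rw [dist_ll (fun e => hl (by rw [e]; exact hs)), dist_ll (fun e => hm (by rw [e]; exact hs))]
    · -- P1'
      rintro p ⟨hp, hpskew⟩ q ⟨hq, hqskew⟩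
      have := hres (.inl p) (.inl q) ?_
      · exact Sum.inl.inj this
      rintro (r | n) hs
      · rw [dist_pp (fun e => hp (by rw [e]; exact hs)), dist_pp (fun e => hq (by rw [e]; exact hs))]
      · rw [dist_pl_not_mem (hpskew n hs), dist_pl_not_mem (hqskew n hs)]
    · -- P2
      rintro p hp l ⟨hl, hpl, hl1⟩ m ⟨hm, hpm, hm1⟩
      have hlset : {x : P | Sum.inl x ∈ S ∧ x ∈ l} = {p} := by
        obtain ⟨a, ha⟩ := Set.ncard_eq_one.mp hl1
        have hpa : p ∈ {x : P | Sum.inl x ∈ S ∧ x ∈ l} := ⟨hp, hpl⟩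
        rw [ha] at hpa ⊢
        rw [Set.mem_singleton_iff] at hpa
        rw [hpa]
      have hmset : {x : P | Sum.inl x ∈ S ∧ x ∈ m} = {p} := by
        obtain ⟨a, ha⟩ := Set.ncard_eq_one.mp hm1
        have hpa : p ∈ {x : P | Sum.inl x ∈ S ∧ x ∈ m} := ⟨hp, hpm⟩
        rw [ha] at hpa ⊢
        rw [Set.mem_singleton_iff] at hpa
        rw [hpa]
      have := hres (.inr l) (.inr m) ?_
      · exact Sum.inr.inj this
      rintro (q | n) hs
      · by_cases hq : q = p
        · subst hq
          rw [dist_lp_mem hpl, dist_lp_mem hpm]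
        · have hql : q ∉ l := fun h => hq (by
            have hmem : q ∈ {x : P | Sum.inl x ∈ S ∧ x ∈ l} := ⟨hs, h⟩
            rw [hlset] at hmem; simpa using hmem)
          have hqm : q ∉ m := fun h => hq (by
            have hmem : q ∈ {x : P | Sum.inl x ∈ S ∧ x ∈ m} := ⟨hs, h⟩
            rw [hmset] at hmem; simpa using hmem)
          rw [dist_lp_not_mem hql, dist_lp_not_mem hqm]
      · rw [dist_ll (fun e => hl (by rw [e]; exact hs)), dist_ll (fun e => hm (by rw [e]; exact hs))]
    · -- P2'
      rintro l hl p ⟨hp, hpl, hp1⟩ q ⟨hq, hql, hq1⟩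
      have hpset : {m : L | Sum.inr m ∈ S ∧ p ∈ m} = {l} := by
        obtain ⟨a, ha⟩ := Set.ncard_eq_one.mp hp1
        have hla : l ∈ {m : L | Sum.inr m ∈ S ∧ p ∈ m} := ⟨hl, hpl⟩
        rw [ha] at hla ⊢
        rw [Set.mem_singleton_iff] at hla
        rw [hla]
      have hqset : {m : L | Sum.inr m ∈ S ∧ q ∈ m} = {l} := by
        obtain ⟨a, ha⟩ := Set.ncard_eq_one.mp hq1
        have hla : l ∈ {m : L | Sum.inr m ∈ S ∧ q ∈ m} := ⟨hl, hql⟩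
        rw [ha] at hla ⊢
        rw [Set.mem_singleton_iff] at hla
        rw [hla]
      have := hres (.inl p) (.inl q) ?_
      · exact Sum.inl.inj this
      rintro (r | n) hs
      · rw [dist_pp (fun e => hp (by rw [e]; exact hs)), dist_pp (fun e => hq (by rw [e]; exact hs))]
      · by_cases hn : n = l
        · subst hn
          rw [dist_pl_mem hpl, dist_pl_mem hql]
        · have hpn : p ∉ n := fun h => hn (by
            have hmem : n ∈ {m : L | Sum.inr m ∈ S ∧ p ∈ m} := ⟨hs, h⟩
            rw [hpset] at hmem; simpa using hmem)
          have hqn : q ∉ n := fun h => hn (by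
            have hmem : n ∈ {m : L | Sum.inr m ∈ S ∧ q ∈ m} := ⟨hs, h⟩
            rw [hqset] at hmem; simpa using hmem)
          rw [dist_pl_not_mem hpn, dist_pl_not_mem hqn]
  · rintro ⟨h1, h1', h2, h2'⟩ x y hxy
    -- S is nonempty
    have hSne : S.Nonempty := by
      by_contra hS
      rw [Set.not_nonempty_iff_eq_empty] at hS
      obtain ⟨l, m, hlm⟩ := exists_two_lines P L
      exact hlm (h1 ⟨by simp [hS], fun p hp => by simp [hS] at hp⟩
        ⟨by simp [hS], fun p hp => by simp [hS] at hp⟩)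
    rcases x with p | l <;> rcases y with q | m
    · -- point vs point
      by_contra hne
      have hpq : p ≠ q := fun e => hne (e ▸ rfl)
      have hpS : Sum.inl p ∉ S := fun hp => by
        have := hxy _ hp
        rw [SimpleGraph.dist_self, dist_pp (Ne.symm hpq)] at this
        omega
      have hqS : Sum.inl q ∉ S := fun hq => by
        have := hxy _ hq
        rw [dist_pp hpq, SimpleGraph.dist_self] at this
        omega
      have key : ∀ n : L, Sum.inr n ∈ S → (p ∈ n ↔ q ∈ n) := by
        intro n hn
        have := hxy _ hn
        constructor
        · intro h
          by_contra h'
          rw [dist_pl_mem h, dist_pl_not_mem h'] at this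
          omega
        · intro h
          by_contra h'
          rw [dist_pl_not_mem h', dist_pl_mem h] at this
          omega
      set T := {n : L | Sum.inr n ∈ S ∧ p ∈ n} with hT
      have hTsub : T.Subsingleton := by
        rintro n ⟨hn, hpn⟩ n' ⟨hn', hpn'⟩
        exact (Nondegenerate.eq_or_eq hpn ((key n hn).mp hpn) hpn'
          ((key n' hn').mp hpn')).resolve_left hpq
      rcases T.eq_empty_or_nonempty with hTe | ⟨n, hn⟩
      · refine hpq (h1' ⟨hpS, fun n hn hpn => ?_⟩ ⟨hqS, fun n hn hqn => ?_⟩)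
        · have hmem : n ∈ T := ⟨hn, hpn⟩
          rw [hTe] at hmem
          exact Set.notMem_empty n hmem
        · have hmem : n ∈ T := ⟨hn, (key n hn).mpr hqn⟩
          rw [hTe] at hmem
          exact Set.notMem_empty n hmem
      · have hTsing : T = {n} := hTsub.eq_singleton_of_mem hn
        have hqT : {m : L | Sum.inr m ∈ S ∧ q ∈ m} = T := by
          ext m
          exact and_congr_right fun hm => (key m hm).symm
        refine hpq (h2' n hn.1 ⟨hpS, hn.2, ?_⟩ ⟨hqS, (key n hn.1).mp hn.2, ?_⟩)
        · rw [show {m : L | Sum.inr m ∈ S ∧ p ∈ m} = T from rfl, hTsing]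
          exact Set.ncard_singleton n
        · rw [hqT, hTsing]
          exact Set.ncard_singleton n
    · -- point vs line: impossible
      exfalso
      obtain ⟨s, hs⟩ := hSne
      have hd := hxy s hs
      rcases s with r | n
      · have h1d : (incGraph P L).dist (.inl p) (.inl r) = 0 ∨
            (incGraph P L).dist (.inl p) (.inl r) = 2 := by
          by_cases h : p = r
          · subst h; left; exact SimpleGraph.dist_self
          · right; exact dist_pp h
        have h2d : (incGraph P L).dist (.inr m) (.inl r) = 1 ∨
            (incGraph P L).dist (.inr m) (.inl r) = 3 := by
          by_cases h : r ∈ m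
          · left; exact dist_lp_mem h
          · right; exact dist_lp_not_mem h
        omega
      · have h1d : (incGraph P L).dist (.inl p) (.inr n) = 1 ∨
            (incGraph P L).dist (.inl p) (.inr n) = 3 := by
          by_cases h : p ∈ n
          · left; exact dist_pl_mem h
          · right; exact dist_pl_not_mem h
        have h2d : (incGraph P L).dist (.inr m) (.inr n) = 0 ∨
            (incGraph P L).dist (.inr m) (.inr n) = 2 := by
          by_cases h : m = n
          · subst h; left; exact SimpleGraph.dist_self
          · right; exact dist_ll h
        omega
    · -- line vs point: impossible
      exfalso
      obtain ⟨s, hs⟩ := hSne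
      have hd := hxy s hs
      rcases s with r | n
      · have h1d : (incGraph P L).dist (.inr l) (.inl r) = 1 ∨
            (incGraph P L).dist (.inr l) (.inl r) = 3 := by
          by_cases h : r ∈ l
          · left; exact dist_lp_mem h
          · right; exact dist_lp_not_mem h
        have h2d : (incGraph P L).dist (.inl q) (.inl r) = 0 ∨
            (incGraph P L).dist (.inl q) (.inl r) = 2 := by
          by_cases h : q = r
          · subst h; left; exact SimpleGraph.dist_self
          · right; exact dist_pp h
        omega
      · have h1d : (incGraph P L).dist (.inr l) (.inr n) = 0 ∨
            (incGraph P L).dist (.inr l) (.inr n) = 2 := by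
          by_cases h : l = n
          · subst h; left; exact SimpleGraph.dist_self
          · right; exact dist_ll h
        have h2d : (incGraph P L).dist (.inl q) (.inr n) = 1 ∨
            (incGraph P L).dist (.inl q) (.inr n) = 3 := by
          by_cases h : q ∈ n
          · left; exact dist_pl_mem h
          · right; exact dist_pl_not_mem h
        omega
    · -- line vs line
      by_contra hne
      have hlm : l ≠ m := fun e => hne (e ▸ rfl)
      have hlS : Sum.inr l ∉ S := fun hl => by
        have := hxy _ hl
        rw [SimpleGraph.dist_self, dist_ll (Ne.symm hlm)] at this
        omega
      have hmS : Sum.inr m ∉ S := fun hm => by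
        have := hxy _ hm
        rw [dist_ll hlm, SimpleGraph.dist_self] at this
        omega
      have key : ∀ x : P, Sum.inl x ∈ S → (x ∈ l ↔ x ∈ m) := by
        intro x hx
        have := hxy _ hx
        constructor
        · intro h
          by_contra h'
          rw [dist_lp_mem h, dist_lp_not_mem h'] at this
          omega
        · intro h
          by_contra h'
          rw [dist_lp_not_mem h', dist_lp_mem h] at this
          omega
      set T := {x : P | Sum.inl x ∈ S ∧ x ∈ l} with hT
      have hTsub : T.Subsingleton := by
        rintro x ⟨hx, hxl⟩ x' ⟨hx', hxl'⟩
        exact (Nondegenerate.eq_or_eq hxl hxl' ((key x hx).mp hxl)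
          ((key x' hx').mp hxl')).resolve_right hlm
      rcases T.eq_empty_or_nonempty with hTe | ⟨x, hx⟩
      · refine hlm (h1 ⟨hlS, fun r hr hrl => ?_⟩ ⟨hmS, fun r hr hrm => ?_⟩)
        · have hmem : r ∈ T := ⟨hr, hrl⟩
          rw [hTe] at hmem
          exact Set.notMem_empty r hmem
        · have hmem : r ∈ T := ⟨hr, (key r hr).mpr hrm⟩
          rw [hTe] at hmem
          exact Set.notMem_empty r hmem
      · have hTsing : T = {x} := hTsub.eq_singleton_of_mem hx
        have hmT : {r : P | Sum.inl r ∈ S ∧ r ∈ m} = T := by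
          ext r
          exact and_congr_right fun hr => (key r hr).symm
        refine hlm (h2 x hx.1 ⟨hlS, hx.2, ?_⟩ ⟨hmS, (key x hx.1).mp hx.2, ?_⟩)
        · rw [show {r : P | Sum.inl r ∈ S ∧ r ∈ l} = T from rfl, hTsing]
          exact Set.ncard_singleton x
        · rw [hmT, hTsing]
          exact Set.ncard_singleton x
end

section
/- The metric dimension of the incidence graph of the Fano plane (projective plane of order 2) is exactly 5. -/
open Configuration

variable (P L : Type*) [Membership P L]

namespace FanoAux

open Configuration.ProjectivePlane Configuration.Nondegenerate
open Configuration.HasPoints (mkPoint mkPoint_ax)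
open Sum SimpleGraph
set_option linter.unusedSectionVars false

section Basic
variable {P L : Type*} [Membership P L]

lemma adj_lr {p : P} {l : L} : (incGraph P L).Adj (inl p) (inr l) ↔ p ∈ l := Iff.rfl
lemma adj_rl {p : P} {l : L} : (incGraph P L).Adj (inr l) (inl p) ↔ p ∈ l := Iff.rfl
lemma not_adj_ll (p q : P) : ¬ (incGraph P L).Adj (inl p) (inl q) := fun h => h
lemma not_adj_rr (l m : L) : ¬ (incGraph P L).Adj (inr l) (inr m) := fun h => h

lemma walk_parity {x y : P ⊕ L} (w : (incGraph P L).Walk x y) :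
    Even w.length ↔ (x.isLeft = y.isLeft) := by
  induction w with
  | nil => simp
  | @cons u v z h p ih =>
    have huv : u.isLeft ≠ v.isLeft := by
      rcases u with a | a <;> rcases v with b | b <;> simp <;> exact h
    rw [SimpleGraph.Walk.length_cons, Nat.even_add_one, ih]
    cases hul : u.isLeft <;> cases hvl : v.isLeft <;> cases hzl : z.isLeft <;> simp_all

variable [ProjectivePlane P L] [Fintype P] [Fintype L]

lemma exists_point_on (l : L) : ∃ p : P, p ∈ l := by
  have h := two_lt_pointCount P l
  rw [pointCount] at h
  have h0 : Nat.card { p : P // p ∈ l } ≠ 0 := by omega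
  obtain ⟨⟨p, hp⟩, -⟩ := Nat.card_ne_zero.mp h0
  exact ⟨p, hp⟩

open scoped Classical in
lemma dist_ll (p q : P) :
    (incGraph P L).dist (inl p) (inl q) = if p = q then 0 else 2 := by
  split_ifs with h
  · subst h; simp
  · have hl := HasLines.mkLine_ax (P := P) (L := L) h
    have w : (incGraph P L).Walk (inl p) (inl q) :=
      .cons (adj_lr.mpr hl.1) (.cons (adj_rl.mpr hl.2) .nil)
    have hle : (incGraph P L).dist (inl p) (inl q) ≤ 2 := by
      simpa using SimpleGraph.dist_le
        (.cons (adj_lr.mpr hl.1) (.cons (adj_rl.mpr hl.2) .nil) :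
          (incGraph P L).Walk (inl p) (inl q))
    have h0 : 0 < (incGraph P L).dist (inl p) (inl q) :=
      w.reachable.pos_dist_of_ne (by simp [h])
    have h1 : (incGraph P L).dist (inl p) (inl q) ≠ 1 := fun e =>
      not_adj_ll p q (SimpleGraph.dist_eq_one_iff_adj.mp e)
    omega

open scoped Classical in
lemma dist_rr (l m : L) :
    (incGraph P L).dist (inr l : P ⊕ L) (inr m) = if l = m then 0 else 2 := by
  split_ifs with h
  · subst h; simp
  · have hl := mkPoint_ax (P := P) h
    have w : (incGraph P L).Walk (inr l) (inr m) :=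
      .cons (adj_rl.mpr hl.1) (.cons (adj_lr.mpr hl.2) .nil)
    have hle : (incGraph P L).dist (inr l : P ⊕ L) (inr m) ≤ 2 := by
      simpa using SimpleGraph.dist_le
        (.cons (adj_rl.mpr hl.1) (.cons (adj_lr.mpr hl.2) .nil) :
          (incGraph P L).Walk (inr l) (inr m))
    have h0 : 0 < (incGraph P L).dist (inr l : P ⊕ L) (inr m) :=
      w.reachable.pos_dist_of_ne (by simp [h])
    have h1 : (incGraph P L).dist (inr l : P ⊕ L) (inr m) ≠ 1 := fun e =>
      not_adj_rr l m (SimpleGraph.dist_eq_one_iff_adj.mp e)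
    omega

open scoped Classical in
lemma dist_lr (p : P) (l : L) :
    (incGraph P L).dist (inl p) (inr l) = if p ∈ l then 1 else 3 := by
  split_ifs with h
  · exact SimpleGraph.dist_eq_one_iff_adj.mpr (adj_lr.mpr h)
  · obtain ⟨q, hq⟩ := exists_point_on (P := P) l
    have hpq : p ≠ q := fun e => h (e ▸ hq)
    have hl := HasLines.mkLine_ax (P := P) (L := L) hpq
    have w : (incGraph P L).Walk (inl p) (inr l) :=
      .cons (adj_lr.mpr hl.1) (.cons (adj_rl.mpr hl.2) (.cons (adj_lr.mpr hq) .nil))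
    have hle : (incGraph P L).dist (inl p) (inr l) ≤ 3 := by
      simpa using SimpleGraph.dist_le
        (.cons (adj_lr.mpr hl.1) (.cons (adj_rl.mpr hl.2) (.cons (adj_lr.mpr hq) .nil)) :
          (incGraph P L).Walk (inl p) (inr l))
    have h0 : 0 < (incGraph P L).dist (inl p) (inr l) :=
      w.reachable.pos_dist_of_ne (by simp)
    have h1 : (incGraph P L).dist (inl p) (inr l) ≠ 1 := fun e =>
      h (adj_lr.mp (SimpleGraph.dist_eq_one_iff_adj.mp e))
    have h2 : (incGraph P L).dist (inl p) (inr l) ≠ 2 := by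
      intro e
      obtain ⟨W, hW⟩ := w.reachable.exists_walk_length_eq_dist
      have := (walk_parity W).mp (by rw [hW, e]; exact ⟨1, rfl⟩)
      simp at this
    omega

open scoped Classical in
lemma dist_rl (p : P) (l : L) :
    (incGraph P L).dist (inr l : P ⊕ L) (inl p) = if p ∈ l then 1 else 3 := by
  rw [SimpleGraph.dist_comm]; exact dist_lr p l


end Basic

section Plane
variable {P L : Type*} [Membership P L] [ProjectivePlane P L] [Fintype P] [Fintype L]
open scoped Classical

lemma card_pts (hq : order P L = 2) (l : L) :
    (Finset.univ.filter (· ∈ l) : Finset P).card = 3 := by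
  have h := pointCount_eq P l
  rw [hq, pointCount, Nat.card_eq_fintype_card, Fintype.card_subtype] at h
  exact h

lemma card_lines_through (hq : order P L = 2) (p : P) :
    (Finset.univ.filter (p ∈ ·) : Finset L).card = 3 := by
  have h := lineCount_eq L p
  rw [hq, lineCount, Nat.card_eq_fintype_card, Fintype.card_subtype] at h
  exact h

lemma card_P (hq : order P L = 2) : Fintype.card P = 7 := by
  have h := card_points P L
  rw [hq] at h
  norm_num at h
  exact h

lemma card_L (hq : order P L = 2) : Fintype.card L = 7 := by
  have h := card_lines P L
  rw [hq] at h
  norm_num at h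
  exact h

lemma no_four_on_line (hq : order P L = 2) {l : L} {a b c d : P}
    (ha : a ∈ l) (hb : b ∈ l) (hc : c ∈ l) (hd : d ∈ l)
    (hab : a ≠ b) (hac : a ≠ c) (had : a ≠ d) (hbc : b ≠ c) (hbd : b ≠ d) (hcd : c ≠ d) :
    False := by
  have hsub : ({a, b, c, d} : Finset P) ⊆ Finset.univ.filter (· ∈ l) := by
    intro x hx
    simp only [Finset.mem_insert, Finset.mem_singleton] at hx
    rcases hx with rfl | rfl | rfl | rfl <;> simp [ha, hb, hc, hd]
  have h4 : ({a, b, c, d} : Finset P).card = 4 := by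
    rw [Finset.card_insert_of_notMem (by simp [hab, hac, had]),
        Finset.card_insert_of_notMem (by simp [hbc, hbd]),
        Finset.card_insert_of_notMem (by simp [hcd]), Finset.card_singleton]
  have := Finset.card_le_card hsub
  rw [h4, card_pts hq] at this
  omega

lemma no_four_through_point (hq : order P L = 2) {p : P} {a b c d : L}
    (ha : p ∈ a) (hb : p ∈ b) (hc : p ∈ c) (hd : p ∈ d)
    (hab : a ≠ b) (hac : a ≠ c) (had : a ≠ d) (hbc : b ≠ c) (hbd : b ≠ d) (hcd : c ≠ d) :
    False := by
  have hsub : ({a, b, c, d} : Finset L) ⊆ Finset.univ.filter (p ∈ ·) := by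
    intro x hx
    simp only [Finset.mem_insert, Finset.mem_singleton] at hx
    rcases hx with rfl | rfl | rfl | rfl <;> simp [ha, hb, hc, hd]
  have h4 : ({a, b, c, d} : Finset L).card = 4 := by
    rw [Finset.card_insert_of_notMem (by simp [hab, hac, had]),
        Finset.card_insert_of_notMem (by simp [hbc, hbd]),
        Finset.card_insert_of_notMem (by simp [hcd]), Finset.card_singleton]
  have := Finset.card_le_card hsub
  rw [h4, card_lines_through hq] at this
  omega

lemma exists_off (hq : order P L = 2) {l1 l2 l3 : L} {x p1 p2 : P}
    (hx1 : x ∈ l1) (hx2 : x ∈ l2) (hp11 : p1 ∈ l1) (hp13 : p1 ∈ l3)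
    (hp22 : p2 ∈ l2) (hp23 : p2 ∈ l3) (hp21 : p2 ∉ l1) :
    ∃ p : P, p ∉ l1 ∧ p ∉ l2 ∧ p ∉ l3 := by
  set A : Finset P := Finset.univ.filter (· ∈ l1) with hA
  set B : Finset P := Finset.univ.filter (· ∈ l2) with hB
  set C : Finset P := Finset.univ.filter (· ∈ l3) with hC
  have hBA : (B \ A).card ≤ 2 := by
    have hsub : B \ A ⊆ B.erase x := by
      intro y hy
      rw [Finset.mem_sdiff] at hy
      refine Finset.mem_erase.mpr ⟨?_, hy.1⟩
      rintro rfl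
      exact hy.2 (by simp [hA, hx1])
    have := Finset.card_le_card hsub
    rw [Finset.card_erase_of_mem (by simp [hB, hx2]), card_pts hq] at this
    omega
  have hCA : (C \ A).card ≤ 2 := by
    have hsub : C \ A ⊆ C.erase p1 := by
      intro y hy
      rw [Finset.mem_sdiff] at hy
      refine Finset.mem_erase.mpr ⟨?_, hy.1⟩
      rintro rfl
      exact hy.2 (by simp [hA, hp11])
    have := Finset.card_le_card hsub
    rw [Finset.card_erase_of_mem (by simp [hC, hp13]), card_pts hq] at this
    omega
  have hI : 1 ≤ ((B \ A) ∩ (C \ A)).card :=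
    Finset.card_pos.mpr ⟨p2, by simp [hA, hB, hC, hp22, hp23, hp21]⟩
  have hU : ((B \ A) ∪ (C \ A)).card ≤ 3 := by
    have := Finset.card_union_add_card_inter (B \ A) (C \ A)
    omega
  have htot : (A ∪ (B \ A ∪ C \ A)).card ≤ 6 := by
    have h1 := Finset.card_union_le A (B \ A ∪ C \ A)
    have h2 : A.card = 3 := card_pts hq l1
    omega
  by_contra hcontra
  push_neg at hcontra
  have huniv : (Finset.univ : Finset P) ⊆ A ∪ (B \ A ∪ C \ A) := by
    intro y _
    rcases Classical.em (y ∈ l1) with h | h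
    · exact Finset.mem_union_left _ (by simp [hA, h])
    rcases Classical.em (y ∈ l2) with h' | h'
    · exact Finset.mem_union_right _ (Finset.mem_union_left _
        (by simp [hA, hB, h, h']))
    · have h3 := hcontra y h h'
      exact Finset.mem_union_right _ (Finset.mem_union_right _
        (by simp [hA, hC, h, h3]))
  have := Finset.card_le_card huniv
  rw [Finset.card_univ, card_P hq] at this
  omega


theorem exists_resolving (hq : order P L = 2) :
    ∃ S : Finset (P ⊕ L), S.card = 5 ∧ IsResolvingSet P L ↑S := by
  -- two distinct lines
  obtain ⟨q1, q2, q3, m1, m2, m3, hc1, hc2, hc3, hc4, hc5, hc6, hc7, hc8⟩ :=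
    exists_config (P := P) (L := L)
  have hl12 : m2 ≠ m3 := fun e => hc8 (e ▸ hc7)
  set l1 := m2
  set l2 := m3
  have hx := mkPoint_ax (P := P) hl12
  set x : P := mkPoint hl12 with hxdef
  obtain ⟨hx1, hx2⟩ := hx
  -- p1 on l1, ≠ x
  obtain ⟨p1, hp1mem, hp1x⟩ := Finset.exists_mem_ne
    (s := (Finset.univ.filter (· ∈ l1) : Finset P)) (by rw [card_pts hq]; norm_num) x
  have hp1l1 : p1 ∈ l1 := (Finset.mem_filter.mp hp1mem).2
  have hp1l2 : p1 ∉ l2 := fun h =>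
    hp1x ((eq_or_eq hp1l1 hx1 h hx2).resolve_right hl12)
  obtain ⟨p2, hp2mem, hp2x⟩ := Finset.exists_mem_ne
    (s := (Finset.univ.filter (· ∈ l2) : Finset P)) (by rw [card_pts hq]; norm_num) x
  have hp2l2 : p2 ∈ l2 := (Finset.mem_filter.mp hp2mem).2
  have hp2l1 : p2 ∉ l1 := fun h =>
    hp2x ((eq_or_eq hp2l2 hx2 h hx1).resolve_right (Ne.symm hl12))
  have hp12 : p1 ≠ p2 := fun e => hp2l1 (e ▸ hp1l1)
  have hl3ax := HasLines.mkLine_ax (L := L) hp12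
  set l3 : L := HasLines.mkLine hp12 with hl3def
  obtain ⟨hp1l3, hp2l3⟩ := hl3ax
  have hl31 : l3 ≠ l1 := fun e => hp2l1 (e ▸ hp2l3)
  have hl32 : l3 ≠ l2 := fun e => hp1l2 (e ▸ hp1l3)
  have hxl3 : x ∉ l3 := fun h =>
    hp1x (((eq_or_eq hx1 hp1l1 h hp1l3).resolve_right (Ne.symm hl31)).symm)
  obtain ⟨p3, h31, h32, h33⟩ := exists_off hq hx1 hx2 hp1l1 hp1l3 hp2l2 hp2l3 hp2l1
  have hp13 : p1 ≠ p3 := fun e => h31 (e ▸ hp1l1)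
  have hp23 : p2 ≠ p3 := fun e => h32 (e ▸ hp2l2)
  have hp3x : p3 ≠ x := fun e => h31 (e ▸ hx1)
  -- auxiliary lines
  have hl13ax := HasLines.mkLine_ax (L := L) hp13
  set l13 : L := HasLines.mkLine hp13 with hl13def
  obtain ⟨hp1l13, hp3l13⟩ := hl13ax
  have hl23ax := HasLines.mkLine_ax (L := L) hp23
  set l23 : L := HasLines.mkLine hp23 with hl23def
  obtain ⟨hp2l23, hp3l23⟩ := hl23ax
  have hp2l13 : p2 ∉ l13 := fun h =>
    h33 ((eq_or_eq hp1l3 hp2l3 hp1l13 h).resolve_left hp12 ▸ hp3l13)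
  have hp1l23 : p1 ∉ l23 := fun h =>
    h33 ((eq_or_eq hp2l3 hp1l3 hp2l23 h).resolve_left (Ne.symm hp12) ▸ hp3l23)
  have hl13_23 : l13 ≠ l23 := fun e => hp1l23 (e ▸ hp1l13)
  have hl13_1 : l13 ≠ l1 := fun e => h31 (e ▸ hp3l13)
  have hl13_2 : l13 ≠ l2 := fun e => h32 (e ▸ hp3l13)
  have hl23_1 : l23 ≠ l1 := fun e => h31 (e ▸ hp3l23)
  have hl23_2 : l23 ≠ l2 := fun e => h32 (e ▸ hp3l23)
  have hl3_13 : l3 ≠ l13 := fun e => h33 (e ▸ hp3l13)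
  have hl3_23 : l3 ≠ l23 := fun e => h33 (e ▸ hp3l23)
  refine ⟨{inl p1, inl p2, inl p3, inr l1, inr l2}, ?_, ?_⟩
  · rw [Finset.card_insert_of_notMem (by simp [hp12, hp13]),
        Finset.card_insert_of_notMem (by simp [hp23]),
        Finset.card_insert_of_notMem (by simp),
        Finset.card_insert_of_notMem (by simp [hl12]), Finset.card_singleton]
  intro u v h
  have h_1 := h (inl p1) (by simp)
  have h_2 := h (inl p2) (by simp)
  have h_3 := h (inl p3) (by simp)
  have h_4 := h (inr l1) (by simp)
  have h_5 := h (inr l2) (by simp)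
  clear h
  rcases u with p | l <;> rcases v with q | m
  · -- point vs point
    rw [dist_ll p p1, dist_ll q p1] at h_1
    rw [dist_ll p p2, dist_ll q p2] at h_2
    rw [dist_ll p p3, dist_ll q p3] at h_3
    rw [dist_lr p l1, dist_lr q l1] at h_4
    rw [dist_lr p l2, dist_lr q l2] at h_5
    have e1 : p = p1 ↔ q = p1 := by split_ifs at h_1 <;> simp_all
    have e2 : p = p2 ↔ q = p2 := by split_ifs at h_2 <;> simp_all
    have e3 : p = p3 ↔ q = p3 := by split_ifs at h_3 <;> simp_all
    have f1 : p ∈ l1 ↔ q ∈ l1 := by split_ifs at h_4 <;> simp_all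
    have f2 : p ∈ l2 ↔ q ∈ l2 := by split_ifs at h_5 <;> simp_all
    refine congrArg inl ?_
    by_cases hpp1 : p = p1
    · exact hpp1.trans (e1.mp hpp1).symm
    by_cases hpp2 : p = p2
    · exact hpp2.trans (e2.mp hpp2).symm
    by_cases hpp3 : p = p3
    · exact hpp3.trans (e3.mp hpp3).symm
    have hqq1 : q ≠ p1 := fun e => hpp1 (e1.mpr e)
    have hqq2 : q ≠ p2 := fun e => hpp2 (e2.mpr e)
    have hqq3 : q ≠ p3 := fun e => hpp3 (e3.mpr e)
    by_contra hne
    by_cases hpl1 : p ∈ l1 <;> by_cases hpl2 : p ∈ l2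
    · exact hne ((eq_or_eq hpl1 (f1.mp hpl1) hpl2 (f2.mp hpl2)).resolve_right hl12)
    · -- p, q on l1 only; x, p1 also on l1
      have hpx : p ≠ x := fun e => hpl2 (e ▸ hx2)
      have hqx : q ≠ x := fun e => (fun h' => hpl2 (f2.mpr h')) (e ▸ hx2)
      exact no_four_on_line hq hx1 hp1l1 hpl1 (f1.mp hpl1)
        hp1x.symm (Ne.symm hpx) (Ne.symm hqx) (Ne.symm hpp1) (Ne.symm hqq1) hne
    · have hpx : p ≠ x := fun e => hpl1 (e ▸ hx1)
      have hqx : q ≠ x := fun e => (fun h' => hpl1 (f1.mpr h')) (e ▸ hx1)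
      exact no_four_on_line hq hx2 hp2l2 hpl2 (f2.mp hpl2)
        hp2x.symm (Ne.symm hpx) (Ne.symm hqx) (Ne.symm hpp2) (Ne.symm hqq2) hne
    · -- p, q off l1 and l2
      have hql1 : q ∉ l1 := fun h' => hpl1 (f1.mpr h')
      have hql2 : q ∉ l2 := fun h' => hpl2 (f2.mpr h')
      have hxp : x ≠ p := fun e => hpl1 (e ▸ hx1)
      have hxq : x ≠ q := fun e => hql1 (e ▸ hx1)
      have hxp3 : x ≠ p3 := Ne.symm hp3x
      have haxp := HasLines.mkLine_ax (L := L) hxp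
      set n : L := HasLines.mkLine hxp with hndef
      have haxq := HasLines.mkLine_ax (L := L) hxq
      set nq : L := HasLines.mkLine hxq with hnqdef
      have haxp3 := HasLines.mkLine_ax (L := L) hxp3
      set n3 : L := HasLines.mkLine hxp3 with hn3def
      have hn_l1 : n ≠ l1 := fun e => hpl1 (e ▸ haxp.2)
      have hn_l2 : n ≠ l2 := fun e => hpl2 (e ▸ haxp.2)
      have hnq_l1 : nq ≠ l1 := fun e => hql1 (e ▸ haxq.2)
      have hnq_l2 : nq ≠ l2 := fun e => hql2 (e ▸ haxq.2)
      have hn3_l1 : n3 ≠ l1 := fun e => h31 (e ▸ haxp3.2)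
      have hn3_l2 : n3 ≠ l2 := fun e => h32 (e ▸ haxp3.2)
      have hnnq : n = nq := by
        by_contra hne'
        exact no_four_through_point hq hx1 hx2 haxp.1 haxq.1
          hl12 (Ne.symm hn_l1) (Ne.symm hnq_l1) (Ne.symm hn_l2) (Ne.symm hnq_l2) hne'
      have hnn3 : n = n3 := by
        by_contra hne'
        exact no_four_through_point hq hx1 hx2 haxp.1 haxp3.1
          hl12 (Ne.symm hn_l1) (Ne.symm hn3_l1) (Ne.symm hn_l2) (Ne.symm hn3_l2) hne'
      have hqn : q ∈ n := hnnq ▸ haxq.2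
      have hp3n : p3 ∈ n := hnn3 ▸ haxp3.2
      exact no_four_on_line hq haxp.1 haxp.2 hqn hp3n
        hxp hxq hxp3 hne hpp3 hqq3
  · -- point vs line : impossible
    exfalso
    rw [dist_ll p p1, dist_rl p1 m] at h_1
    split_ifs at h_1 <;> omega
  · exfalso
    rw [dist_rl p1 l, dist_ll q p1] at h_1
    split_ifs at h_1 <;> omega
  · -- line vs line
    rw [dist_rl p1 l, dist_rl p1 m] at h_1
    rw [dist_rl p2 l, dist_rl p2 m] at h_2
    rw [dist_rl p3 l, dist_rl p3 m] at h_3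
    rw [dist_rr l l1, dist_rr m l1] at h_4
    rw [dist_rr l l2, dist_rr m l2] at h_5
    have f1 : p1 ∈ l ↔ p1 ∈ m := by split_ifs at h_1 <;> simp_all
    have f2 : p2 ∈ l ↔ p2 ∈ m := by split_ifs at h_2 <;> simp_all
    have f3 : p3 ∈ l ↔ p3 ∈ m := by split_ifs at h_3 <;> simp_all
    have e1 : l = l1 ↔ m = l1 := by split_ifs at h_4 <;> simp_all
    have e2 : l = l2 ↔ m = l2 := by split_ifs at h_5 <;> simp_all
    refine congrArg inr ?_
    by_cases hll1 : l = l1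
    · exact hll1.trans (e1.mp hll1).symm
    by_cases hll2 : l = l2
    · exact hll2.trans (e2.mp hll2).symm
    have hml1 : m ≠ l1 := fun e => hll1 (e1.mpr e)
    have hml2 : m ≠ l2 := fun e => hll2 (e2.mpr e)
    by_contra hne
    by_cases g1 : p1 ∈ l <;> by_cases g2 : p2 ∈ l <;> by_cases g3 : p3 ∈ l
    · exact hne ((eq_or_eq g1 g2 (f1.mp g1) (f2.mp g2)).resolve_left hp12)
    · exact hne ((eq_or_eq g1 g2 (f1.mp g1) (f2.mp g2)).resolve_left hp12)
    · exact hne ((eq_or_eq g1 g3 (f1.mp g1) (f3.mp g3)).resolve_left hp13)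
    · -- only p1 on l : lines l1, l3, l13, l through p1
      have hl_l3 : l ≠ l3 := fun e => g2 (e ▸ hp2l3)
      have hl_l13 : l ≠ l13 := fun e => g3 (e ▸ hp3l13)
      exact no_four_through_point hq hp1l1 hp1l3 hp1l13 g1
        (Ne.symm hl31) (Ne.symm hl13_1) (Ne.symm hll1) hl3_13 (Ne.symm hl_l3) (Ne.symm hl_l13)
    · exact hne ((eq_or_eq g2 g3 (f2.mp g2) (f3.mp g3)).resolve_left hp23)
    · -- only p2 on l : lines l2, l3, l23, l through p2
      have hl_l3 : l ≠ l3 := fun e => g1 (e ▸ hp1l3)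
      have hl_l23 : l ≠ l23 := fun e => g3 (e ▸ hp3l23)
      exact no_four_through_point hq hp2l2 hp2l3 hp2l23 g2
        (Ne.symm hl32) (Ne.symm hl23_2) (Ne.symm hll2) hl3_23 (Ne.symm hl_l3) (Ne.symm hl_l23)
    · -- only p3 on l (and m): lines l13, l23, l, m through p3
      have hml13 : m ≠ l13 := fun e => (fun h' => g1 (f1.mpr h')) (e ▸ hp1l13)
      have hml23 : m ≠ l23 := fun e => (fun h' => g2 (f2.mpr h')) (e ▸ hp2l23)
      have hll13 : l ≠ l13 := fun e => g1 (e ▸ hp1l13)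
      have hll23 : l ≠ l23 := fun e => g2 (e ▸ hp2l23)
      exact no_four_through_point hq hp3l13 hp3l23 g3 (f3.mp g3)
        hl13_23 (Ne.symm hll13) (Ne.symm hml13) (Ne.symm hll23) (Ne.symm hml23) hne
    · -- none of p1,p2,p3 on l (and m)
      have hm1 : p1 ∉ m := fun h' => g1 (f1.mpr h')
      have hm2 : p2 ∉ m := fun h' => g2 (f2.mpr h')
      have hm3 : p3 ∉ m := fun h' => g3 (f3.mpr h')
      have hy := mkPoint_ax (P := P) hne
      set y : P := mkPoint hne with hydef
      have hyp1 : y ≠ p1 := fun e => g1 (e ▸ hy.1)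
      have hyp2 : y ≠ p2 := fun e => g2 (e ▸ hy.1)
      have hyp3 : y ≠ p3 := fun e => g3 (e ▸ hy.1)
      have han1 := HasLines.mkLine_ax (L := L) hyp1
      set n1 : L := HasLines.mkLine hyp1 with hn1def
      have han2 := HasLines.mkLine_ax (L := L) hyp2
      set n2 : L := HasLines.mkLine hyp2 with hn2def
      have han3 := HasLines.mkLine_ax (L := L) hyp3
      set n3 : L := HasLines.mkLine hyp3 with hn3def
      have hn1l : n1 ≠ l := fun e => g1 (e ▸ han1.2)
      have hn1m : n1 ≠ m := fun e => hm1 (e ▸ han1.2)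
      have hn2l : n2 ≠ l := fun e => g2 (e ▸ han2.2)
      have hn2m : n2 ≠ m := fun e => hm2 (e ▸ han2.2)
      have hn3l : n3 ≠ l := fun e => g3 (e ▸ han3.2)
      have hn3m : n3 ≠ m := fun e => hm3 (e ▸ han3.2)
      have h12 : n1 = n2 := by
        by_contra hne'
        exact no_four_through_point hq hy.1 hy.2 han1.1 han2.1
          hne (Ne.symm hn1l) (Ne.symm hn2l) (Ne.symm hn1m) (Ne.symm hn2m) hne'
      have h13 : n1 = n3 := by
        by_contra hne'
        exact no_four_through_point hq hy.1 hy.2 han1.1 han3.1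
          hne (Ne.symm hn1l) (Ne.symm hn3l) (Ne.symm hn1m) (Ne.symm hn3m) hne'
      have hp2n1 : p2 ∈ n1 := h12 ▸ han2.2
      have hp3n1 : p3 ∈ n1 := h13 ▸ han3.2
      have : n1 = l3 := (eq_or_eq han1.2 hp2n1 hp1l3 hp2l3).resolve_left hp12
      exact h33 (this ▸ hp3n1)


lemma arith {a b : ℕ} (h1 : 7 - a ≤ 2 ^ b) (h2 : 7 - b ≤ 2 ^ a) (h : a + b ≤ 4) : False := by
  have ha : a ≤ 4 := by omega
  have hb : b ≤ 4 := by omega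
  interval_cases a <;> interval_cases b <;> simp_all

theorem resolving_card_ge (hq : order P L = 2) {S : Finset (P ⊕ L)}
    (hS : IsResolvingSet P L ↑S) : 5 ≤ S.card := by
  set A := S.toLeft with hA
  set B := S.toRight with hB
  have hsig : ∀ p q : P, p ∉ A → q ∉ A →
      B.filter (p ∈ ·) = B.filter (q ∈ ·) → p = q := by
    intro p q hp hq' hpq
    have := hS (inl p) (inl q) ?_
    · exact inl_injective this
    intro s hs
    rw [Finset.mem_coe] at hs
    rcases s with r | m
    · have hr : r ∈ A := Finset.mem_toLeft.mpr hs
      rw [dist_ll, dist_ll, if_neg (by rintro rfl; exact hp hr), if_neg (by rintro rfl; exact hq' hr)]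
    · have hm : m ∈ B := Finset.mem_toRight.mpr hs
      have hmem : p ∈ m ↔ q ∈ m := by
        have := Finset.ext_iff.mp hpq m
        simpa [hm] using this
      rw [dist_lr, dist_lr]
      split_ifs with h1 h2 <;> first | rfl | (exact absurd (hmem.mp h1) h2) |
        (exact absurd (hmem.mpr ‹q ∈ m›) h1)
  have hsigL : ∀ l m : L, l ∉ B → m ∉ B →
      A.filter (· ∈ l) = A.filter (· ∈ m) → l = m := by
    intro l m hl hm hlm
    have := hS (inr l) (inr m) ?_
    · exact inr_injective this
    intro s hs
    rw [Finset.mem_coe] at hs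
    rcases s with r | m'
    · have hr : r ∈ A := Finset.mem_toLeft.mpr hs
      have hmem : r ∈ l ↔ r ∈ m := by
        have := Finset.ext_iff.mp hlm r
        simpa [hr] using this
      rw [dist_rl, dist_rl]
      split_ifs with h1 h2 <;> first | rfl | (exact absurd (hmem.mp h1) h2) |
        (exact absurd (hmem.mpr ‹r ∈ m›) h1)
    · have hm' : m' ∈ B := Finset.mem_toRight.mpr hs
      rw [dist_rr, dist_rr, if_neg (by rintro rfl; exact hl hm'), if_neg (by rintro rfl; exact hm hm')]
  have hcard1 : 7 - A.card ≤ 2 ^ B.card := by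
    have hinj : ((Finset.univ \ A) : Finset P).card ≤ B.powerset.card := by
      apply Finset.card_le_card_of_injOn (fun p => B.filter (p ∈ ·))
      · exact fun p _ => Finset.mem_powerset.mpr (Finset.filter_subset _ _)
      · intro p hp q hq' e
        simp only [Finset.coe_sdiff, Finset.coe_univ, Set.mem_diff, Set.mem_univ, true_and,
          Finset.mem_coe] at hp hq'
        exact hsig p q hp hq' e
    rwa [Finset.card_sdiff_of_subset (Finset.subset_univ A), Finset.card_univ, card_P hq,
      Finset.card_powerset] at hinj
  have hcard2 : 7 - B.card ≤ 2 ^ A.card := by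
    have hinj : ((Finset.univ \ B) : Finset L).card ≤ A.powerset.card := by
      apply Finset.card_le_card_of_injOn (fun l => A.filter (· ∈ l))
      · exact fun l _ => Finset.mem_powerset.mpr (Finset.filter_subset _ _)
      · intro l hl m hm e
        simp only [Finset.coe_sdiff, Finset.coe_univ, Set.mem_diff, Set.mem_univ, true_and,
          Finset.mem_coe] at hl hm
        exact hsigL l m hl hm e
    rwa [Finset.card_sdiff_of_subset (Finset.subset_univ B), Finset.card_univ, card_L hq,
      Finset.card_powerset] at hinj
  have hab : A.card + B.card = S.card := Finset.card_toLeft_add_card_toRight (u := S)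
  by_contra hlt
  push_neg at hlt
  exact arith hcard1 hcard2 (by omega)

theorem metricDim_fano'
    (hq : order P L = 2) : metricDim P L = 5 := by
  obtain ⟨S, hS5, hres⟩ := exists_resolving (P := P) (L := L) hq
  have hmem : 5 ∈ {n | ∃ T : Finset (P ⊕ L), T.card = n ∧ IsResolvingSet P L ↑T} :=
    ⟨S, hS5, hres⟩
  refine le_antisymm (Nat.sInf_le hmem) ?_
  apply le_csInf ⟨5, hmem⟩
  rintro n ⟨T, rfl, hT⟩
  exact resolving_card_ge hq hT


end Plane
end FanoAux

/-- the metric dimension of the Fano plane (projective plane of order 2)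
is exactly 5. -/

theorem metricDim_fano
    {P L : Type*} [Membership P L] [ProjectivePlane P L] [Fintype P] [Fintype L]
    (hq : ProjectivePlane.order P L = 2) :
    metricDim P L = 5 := by
  exact FanoAux.metricDim_fano' hq
end

section
/- Counting lemma: Let e, f be two distinct lines of a projective plane of order q meeting at P, with [e]\{P} = {R_1,…,R_q} and [f]\{P} = {Q_1,…,Q_q}, and let L be a set of lines none of which passes through P. Set r_i = |L ∩ [R_i]|, d_i = max(|L ∩ [Q_i]| − 1, 0), m = d_1 + ⋯ + d_q. Then the number C of points outside [e] ∪ [f] covered by some line of L satisfies C ≤ |L|(q−1) − r_i(|L| − r_i) + m ≤ |L|q − r_i(|L| − r_i + 1) for every index i. -/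
open Configuration

variable (P L : Type*) [Membership P L]

open Configuration.HasPoints in
/-- the counting lemma (Lemma 2.8) for points covered by a set of lines
avoiding the intersection point of two fixed lines. -/
theorem counting_lemma
    {P L : Type*} [Membership P L] [ProjectivePlane P L] [Fintype P] [Fintype L]
    (e f : L) (hef : e ≠ f) (Lset : Set L)
    (hLP : ∀ l ∈ Lset, mkPoint hef ∉ l)
    (R : P) (hRe : R ∈ e) (hRP : R ≠ mkPoint hef) :
    (({x : P | x ∉ e ∧ x ∉ f ∧ ∃ l ∈ Lset, x ∈ l}).ncard : ℤ) ≤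
        (Lset.ncard : ℤ) * ((ProjectivePlane.order P L : ℤ) - 1) -
          (({l ∈ Lset | R ∈ l}).ncard : ℤ) *
            ((Lset.ncard : ℤ) - ({l ∈ Lset | R ∈ l}).ncard) +
          (∑ Qp : P, (({l ∈ Lset | Qp ∈ l ∧ Qp ∈ f ∧ Qp ≠ mkPoint hef}).ncard - 1) : ℕ) ∧
      (Lset.ncard : ℤ) * ((ProjectivePlane.order P L : ℤ) - 1) -
          (({l ∈ Lset | R ∈ l}).ncard : ℤ) *
            ((Lset.ncard : ℤ) - ({l ∈ Lset | R ∈ l}).ncard) +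
          (∑ Qp : P, (({l ∈ Lset | Qp ∈ l ∧ Qp ∈ f ∧ Qp ≠ mkPoint hef}).ncard - 1) : ℕ) ≤
        (Lset.ncard : ℤ) * (ProjectivePlane.order P L : ℤ) -
          (({l ∈ Lset | R ∈ l}).ncard : ℤ) *
            ((Lset.ncard : ℤ) - ({l ∈ Lset | R ∈ l}).ncard + 1) := by
  classical
  set Pnt := (mkPoint hef : P) with hPntdef
  obtain ⟨hPe, hPf⟩ := mkPoint_ax (P := P) hef
  set q := ProjectivePlane.order P L with hqdef
  have hq1 : 1 ≤ q := (ProjectivePlane.one_lt_order P L).le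
  -- uniqueness of the point on two distinct lines
  have uniq : ∀ {x y : P} {l₁ l₂ : L}, l₁ ≠ l₂ → x ∈ l₁ → x ∈ l₂ → y ∈ l₁ → y ∈ l₂ → x = y :=
    fun h hx1 hx2 hy1 hy2 => (Nondegenerate.eq_or_eq hx1 hy1 hx2 hy2).resolve_right h
  -- uniqueness of the line on two distinct points
  have uniqL : ∀ {x y : P} {l₁ l₂ : L}, x ≠ y → x ∈ l₁ → y ∈ l₁ → x ∈ l₂ → y ∈ l₂ → l₁ = l₂ :=
    fun h hx1 hy1 hx2 hy2 => (Nondegenerate.eq_or_eq hx1 hy1 hx2 hy2).resolve_left h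
  have hRf : R ∉ f := fun hRf => hRP (uniq hef hRe hRf hPe hPf)
  -- Finset versions
  set LF : Finset L := Finset.univ.filter (· ∈ Lset) with hLF
  set rF : Finset L := Finset.univ.filter (fun l => l ∈ Lset ∧ R ∈ l) with hrF
  set d : P → ℕ := fun x => (Finset.univ.filter (fun l : L => l ∈ Lset ∧ x ∈ l ∧ x ∈ f ∧ x ≠ Pnt)).card
    with hd
  set SF : Finset P := Finset.univ.filter (fun x => x ∉ e ∧ x ∉ f ∧ ∃ l ∈ Lset, x ∈ l) with hSF
  set mult : P → ℕ := fun x => (LF.filter (x ∈ ·)).card with hmult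
  set n := LF.card with hn
  set r := rF.card with hr
  set m := ∑ x : P, (d x - 1) with hm
  set C := SF.card with hC
  -- rewrite the ncard expressions
  have conv1 : Lset.ncard = n := by
    rw [show Lset = ↑LF from by ext l; simp [hLF], Set.ncard_coe_finset]
  have conv2 : ({l ∈ Lset | R ∈ l}).ncard = r := by
    rw [show {l ∈ Lset | R ∈ l} = ↑rF from by ext l; simp [hrF], Set.ncard_coe_finset]
  have conv3 : ({x : P | x ∉ e ∧ x ∉ f ∧ ∃ l ∈ Lset, x ∈ l}).ncard = C := by
    rw [show {x : P | x ∉ e ∧ x ∉ f ∧ ∃ l ∈ Lset, x ∈ l} = ↑SF from by ext x; simp [hSF],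
      Set.ncard_coe_finset]
  have convd : ∀ x : P, ({l ∈ Lset | x ∈ l ∧ x ∈ f ∧ x ≠ Pnt}).ncard = d x := by
    intro x
    rw [show {l ∈ Lset | x ∈ l ∧ x ∈ f ∧ x ≠ Pnt}
        = ↑(Finset.univ.filter (fun l : L => l ∈ Lset ∧ x ∈ l ∧ x ∈ f ∧ x ≠ Pnt)) from by ext l; simp,
      Set.ncard_coe_finset]
  simp only [conv1, conv2, conv3, convd]
  -- basic facts
  have hrF_eq : rF = LF.filter (fun l => R ∈ l) := by
    rw [hLF, Finset.filter_filter]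
  have hr_le : r ≤ n := by
    rw [hr, hn, hrF_eq]; exact Finset.card_filter_le _ _
  have hptc : ∀ l : L, (Finset.univ.filter (· ∈ l)).card = q + 1 := by
    intro l
    have := ProjectivePlane.pointCount_eq P l
    rwa [Configuration.pointCount, Nat.card_eq_fintype_card, Fintype.card_subtype] at this
  have hmemLF : ∀ {l : L}, l ∈ LF ↔ l ∈ Lset := by intro l; simp [hLF]
  have hlne : ∀ {l : L}, l ∈ Lset → l ≠ e := by
    intro l hl h; exact hLP l hl (by rw [h]; exact hPe)
  have hlnf : ∀ {l : L}, l ∈ Lset → l ≠ f := by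
    intro l hl h; exact hLP l hl (by rw [h]; exact hPf)
  -- per line count of points off e ∪ f
  set cnt : L → ℕ := fun l => (Finset.univ.filter (fun x : P => x ∈ l ∧ x ∉ e ∧ x ∉ f)).card with hcnt
  have hcnt_l : ∀ l ∈ LF, cnt l + 2 = q + 1 := by
    intro l hl
    rw [hmemLF] at hl
    have hle : l ≠ e := hlne hl
    have hlf : l ≠ f := hlnf hl
    set Xe := (mkPoint hle : P) with hXe
    set Xf := (mkPoint hlf : P) with hXf
    obtain ⟨hXel, hXee⟩ := mkPoint_ax (P := P) hle
    obtain ⟨hXfl, hXff⟩ := mkPoint_ax (P := P) hlf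
    have hXeXf : Xe ≠ Xf := by
      intro h
      have : Xe = Pnt := uniq hef hXee (h ▸ hXff) hPe hPf
      exact hLP l hl (this ▸ hXel)
    have hsplit : (Finset.univ.filter (· ∈ l)) =
        (Finset.univ.filter (fun x : P => x ∈ l ∧ x ∉ e ∧ x ∉ f)) ∪ {Xe, Xf} := by
      ext x
      simp only [Finset.mem_filter, Finset.mem_union, Finset.mem_insert, Finset.mem_singleton,
        Finset.mem_univ, true_and]
      constructor
      · intro hx
        by_cases hxe : x ∈ e
        · exact Or.inr (Or.inl (uniq hle hx hxe hXel hXee))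
        by_cases hxf : x ∈ f
        · exact Or.inr (Or.inr (uniq hlf hx hxf hXfl hXff))
        · exact Or.inl ⟨hx, hxe, hxf⟩
      · rintro (⟨hx, -, -⟩ | h | h)
        · exact hx
        · rw [h]; exact hXel
        · rw [h]; exact hXfl
    have hdisj : Disjoint (Finset.univ.filter (fun x : P => x ∈ l ∧ x ∉ e ∧ x ∉ f)) ({Xe, Xf} : Finset P) := by
      rw [Finset.disjoint_right]
      intro x hx hx'
      simp only [Finset.mem_insert, Finset.mem_singleton] at hx
      simp only [Finset.mem_filter] at hx'
      rcases hx with h | h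
      · exact hx'.2.2.1 (h ▸ hXee)
      · exact hx'.2.2.2 (h ▸ hXff)
    have := hptc l
    rw [hsplit, Finset.card_union_of_disjoint hdisj, Finset.card_pair hXeXf] at this
    exact this
  -- double counting
  have hswap : ∑ l ∈ LF, cnt l = ∑ x : P, (LF.filter (fun l => x ∈ l ∧ x ∉ e ∧ x ∉ f)).card := by
    simp only [hcnt, Finset.card_filter]
    rw [Finset.sum_comm]
  have hinner : ∑ x : P, (LF.filter (fun l => x ∈ l ∧ x ∉ e ∧ x ∉ f)).card
      = ∑ x ∈ SF, mult x := by
    rw [← Finset.sum_subset (Finset.subset_univ SF)]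
    · apply Finset.sum_congr rfl
      intro x hx
      rw [hSF, Finset.mem_filter] at hx
      obtain ⟨-, hxe, hxf, -⟩ := hx
      rw [hmult]
      congr 1
      apply Finset.filter_congr
      intro l _
      simp [hxe, hxf]
    · intro x _ hx
      rw [hSF, Finset.mem_filter] at hx
      push_neg at hx
      rw [Finset.card_eq_zero, Finset.filter_eq_empty_iff]
      intro l hl
      rw [hmemLF] at hl
      rintro ⟨hxl, hxe, hxf⟩
      exact absurd hxl ((hx (Finset.mem_univ x) hxe hxf) l hl)
  have hT : C + ∑ x ∈ SF, (mult x - 1) + 2 * n = n * (q + 1) := by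
    have h1 : ∑ x ∈ SF, mult x = C + ∑ x ∈ SF, (mult x - 1) := by
      have key : ∀ x ∈ SF, mult x = 1 + (mult x - 1) := by
        intro x hx
        rw [hSF, Finset.mem_filter] at hx
        obtain ⟨-, hxe, hxf, l, hl, hxl⟩ := hx
        have : 1 ≤ mult x := by
          rw [hmult]
          exact Finset.card_pos.mpr ⟨l, Finset.mem_filter.mpr ⟨hmemLF.mpr hl, hxl⟩⟩
        omega
      rw [Finset.sum_congr rfl key, Finset.sum_add_distrib, Finset.sum_const, smul_eq_mul,
        mul_one, hC]
    have h2 : ∑ l ∈ LF, (cnt l + 2) = n * (q + 1) := by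
      rw [Finset.sum_congr rfl hcnt_l, Finset.sum_const, hn, smul_eq_mul]
    rw [Finset.sum_add_distrib, Finset.sum_const, hswap, hinner, h1, smul_eq_mul] at h2
    omega
  -- d x : intersection with f is unique, low level facts
  have hd_mult : ∀ x : P, x ∈ f → x ≠ Pnt → d x = mult x := by
    intro x hxf hxP
    rw [hd, hmult]
    simp only
    rw [hLF, Finset.filter_filter]
    congr 1
    apply Finset.filter_congr
    intro l _
    simp only [hxf, hxP, ne_eq, not_false_eq_true, and_true]
  have hd_sum : ∑ x : P, d x = n := by
    have : ∀ x : P, d x = ∑ l : L, if l ∈ Lset ∧ x ∈ l ∧ x ∈ f ∧ x ≠ Pnt then 1 else 0 := by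
      intro x; rw [hd]; simp only; rw [Finset.card_filter]
    simp only [this]
    rw [Finset.sum_comm]
    have : ∀ l : L, (∑ x : P, if l ∈ Lset ∧ x ∈ l ∧ x ∈ f ∧ x ≠ Pnt then 1 else 0)
        = if l ∈ Lset then 1 else 0 := by
      intro l
      by_cases hl : l ∈ Lset
      · simp only [hl, true_and, if_true]
        have hlf : l ≠ f := hlnf hl
        obtain ⟨hXl, hXf⟩ := mkPoint_ax (P := P) hlf
        have : (Finset.univ.filter (fun x : P => x ∈ l ∧ x ∈ f ∧ x ≠ Pnt)) = {mkPoint hlf} := by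
          ext x
          simp only [Finset.mem_filter, Finset.mem_univ, true_and, Finset.mem_singleton]
          constructor
          · rintro ⟨hxl, hxf, -⟩
            exact uniq hlf hxl hxf hXl hXf
          · intro h
            refine ⟨h ▸ hXl, h ▸ hXf, fun hP => ?_⟩
            exact hLP l hl (hP ▸ (h ▸ hXl))
        calc (∑ x : P, if x ∈ l ∧ x ∈ f ∧ x ≠ Pnt then 1 else 0)
            = (Finset.univ.filter (fun x : P => x ∈ l ∧ x ∈ f ∧ x ≠ Pnt)).card := by
              rw [Finset.card_filter]
          _ = 1 := by rw [this]; simp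
      · simp [hl]
    simp only [this]
    rw [hn, hLF, Finset.card_filter]
  -- m + r ≤ n
  rw [← hm]
  have hmr : m + r ≤ n := by
    set ptf : L → P := fun l => if h : l ≠ f then mkPoint h else Pnt with hptf
    have hptf_spec : ∀ l ∈ Lset, ptf l ∈ l ∧ ptf l ∈ f ∧ ptf l ≠ Pnt := by
      intro l hl
      have hlf : l ≠ f := hlnf hl
      rw [hptf]
      simp only
      rw [dif_pos hlf]
      obtain ⟨h1, h2⟩ := mkPoint_ax (P := P) hlf
      exact ⟨h1, h2, fun hP => hLP l hl (hP ▸ h1)⟩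
    set B : Finset P := rF.image ptf with hB
    have hBcard : B.card = r := by
      rw [hB, hr]
      apply Finset.card_image_of_injOn
      intro l₁ hl₁ l₂ hl₂ hEq
      rw [Finset.mem_coe, hrF, Finset.mem_filter] at hl₁ hl₂
      obtain ⟨-, hl₁s, hRl₁⟩ := hl₁
      obtain ⟨-, hl₂s, hRl₂⟩ := hl₂
      obtain ⟨h1, h2, -⟩ := hptf_spec l₁ hl₁s
      obtain ⟨h1', h2', -⟩ := hptf_spec l₂ hl₂s
      have hne : ptf l₁ ≠ R := fun h => hRf (h ▸ h2)
      exact uniqL hne h1 hRl₁ (by rw [hEq]; exact h1') hRl₂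
    have hB1 : ∀ x ∈ B, 1 ≤ d x := by
      intro x hx
      rw [hB, Finset.mem_image] at hx
      obtain ⟨l, hl, hlx⟩ := hx
      rw [hrF, Finset.mem_filter] at hl
      obtain ⟨-, hls, -⟩ := hl
      obtain ⟨h1, h2, h3⟩ := hptf_spec l hls
      rw [hd]
      exact Finset.card_pos.mpr ⟨l, Finset.mem_filter.mpr ⟨Finset.mem_univ l,
        hls, hlx ▸ h1, hlx ▸ h2, hlx ▸ h3⟩⟩
    have hsplit : ∑ x ∈ Finset.univ \ B, (d x - 1) + ∑ x ∈ B, (d x - 1) = ∑ x : P, (d x - 1) :=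
      Finset.sum_sdiff (Finset.subset_univ B)
    have hsplit2 : ∑ x ∈ Finset.univ \ B, d x + ∑ x ∈ B, d x = ∑ x : P, d x :=
      Finset.sum_sdiff (Finset.subset_univ B)
    have hBd : ∑ x ∈ B, (d x - 1) + B.card = ∑ x ∈ B, d x := by
      have key : ∀ x ∈ B, d x = (d x - 1) + 1 := fun x hx => by have := hB1 x hx; omega
      rw [Finset.sum_congr rfl key, Finset.sum_add_distrib, Finset.sum_const, smul_eq_mul,
        mul_one]
    have hle : ∑ x ∈ Finset.univ \ B, (d x - 1) ≤ ∑ x ∈ Finset.univ \ B, d x :=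
      Finset.sum_le_sum fun x _ => Nat.sub_le _ _
    rw [hm, ← hsplit, hBcard.symm, ← hd_sum, ← hsplit2]
    omega
  -- pair counting: r * (n - r) ≤ m + D
  set sF : Finset L := LF.filter (fun l => R ∉ l) with hsF
  set s := sF.card with hs
  have hrs : r + s = n := by
    rw [hr, hs, hrF_eq, hn, hsF]
    exact Finset.card_filter_add_card_filter_not _
  have hpair : r * s ≤ m + ∑ x ∈ SF, (mult x - 1) := by
    set A : Finset (L × L) := rF ×ˢ sF with hA
    have hAcard : A.card = r * s := by rw [hA, Finset.card_product, hr, hs]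
    set g : L × L → P := fun p => if h : p.1 ≠ p.2 then mkPoint h else Pnt with hg
    have hg_spec : ∀ p ∈ A, g p ∈ p.1 ∧ g p ∈ p.2 := by
      intro p hp
      rw [hA, Finset.mem_product] at hp
      rw [hrF, Finset.mem_filter] at hp
      have hne : p.1 ≠ p.2 := by
        intro h
        have := hp.2
        rw [hsF, Finset.mem_filter] at this
        exact this.2 (h ▸ hp.1.2.2)
      rw [hg]
      simp only
      rw [dif_pos hne]
      exact mkPoint_ax (P := P) hne
    -- facts about a point in the image
    have himg : ∀ x ∈ A.image g, x ∉ e ∧ x ≠ Pnt ∧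
        (A.filter (fun p => g p = x)).card ≤ mult x - 1 ∧ 1 ≤ mult x ∧
        ∃ l ∈ Lset, x ∈ l := by
      intro x hx
      rw [Finset.mem_image] at hx
      obtain ⟨p₀, hp₀, hgp₀⟩ := hx
      obtain ⟨hx1, hx2⟩ := hg_spec p₀ hp₀
      rw [hgp₀] at hx1 hx2
      have hp₀' := hp₀
      rw [hA, Finset.mem_product, hrF, hsF, Finset.mem_filter, Finset.mem_filter] at hp₀'
      obtain ⟨⟨-, h1s, hR1⟩, h2LF, hR2⟩ := hp₀'
      have h2s : p₀.2 ∈ Lset := hmemLF.mp h2LF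
      have hxR : x ≠ R := fun h => hR2 (h ▸ hx2)
      have hxe : x ∉ e := by
        intro hxe
        have h1e : p₀.1 = e := uniqL hxR hx1 hR1 hxe hRe
        exact hLP p₀.1 h1s (by rw [h1e]; exact hPe)
      have hxP : x ≠ Pnt := fun h => hLP p₀.2 h2s (h ▸ hx2)
      have hmult1 : 1 ≤ mult x := by
        rw [hmult]
        exact Finset.card_pos.mpr ⟨p₀.2, Finset.mem_filter.mpr ⟨h2LF, hx2⟩⟩
      refine ⟨hxe, hxP, ?_, hmult1, p₀.2, h2s, hx2⟩
      -- the fiber injects into lines through x other than p₀.1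
      have hstep1 : (A.filter (fun p => g p = x)).card
          ≤ ((A.filter (fun p => g p = x)).image Prod.snd).card := by
        apply le_of_eq
        symm
        apply Finset.card_image_of_injOn
        intro p hp p' hp' hEq
        rw [Finset.mem_coe, Finset.mem_filter] at hp hp'
        obtain ⟨hpA, hpg⟩ := hp
        obtain ⟨hp'A, hp'g⟩ := hp'
        obtain ⟨ha1, ha2⟩ := hg_spec p hpA
        obtain ⟨hb1, hb2⟩ := hg_spec p' hp'A
        rw [hpg] at ha1 ha2
        rw [hp'g] at hb1 hb2
        rw [hA, Finset.mem_product] at hpA hp'A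
        obtain ⟨hpA1, -⟩ := hpA
        obtain ⟨hp'A1, -⟩ := hp'A
        rw [hrF, Finset.mem_filter] at hpA1 hp'A1
        have : p.1 = p'.1 := uniqL hxR ha1 hpA1.2.2 hb1 hp'A1.2.2
        exact Prod.ext this hEq
      have hstep2 : (A.filter (fun p => g p = x)).image Prod.snd
          ⊆ (LF.filter (x ∈ ·)).erase p₀.1 := by
        intro l hl
        rw [Finset.mem_image] at hl
        obtain ⟨p, hp, hpl⟩ := hl
        rw [Finset.mem_filter] at hp
        obtain ⟨hpA, hpg⟩ := hp
        obtain ⟨ha1, ha2⟩ := hg_spec p hpA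
        rw [hpg] at ha1 ha2
        rw [hA, Finset.mem_product] at hpA
        obtain ⟨-, hpA2⟩ := hpA
        rw [hsF, Finset.mem_filter] at hpA2
        refine Finset.mem_erase.mpr ⟨?_, Finset.mem_filter.mpr ⟨by rw [← hpl]; exact hpA2.1, by rw [← hpl]; exact ha2⟩⟩
        intro h
        apply hpA2.2
        rw [hpl, h]
        exact hR1
      have hstep3 : ((LF.filter (x ∈ ·)).erase p₀.1).card = mult x - 1 := by
        have hp₀mem : p₀.1 ∈ LF.filter (x ∈ ·) := Finset.mem_filter.mpr ⟨hmemLF.mpr h1s, hx1⟩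
        rw [Finset.card_erase_of_mem hp₀mem, hmult]
      exact le_trans hstep1 (le_trans (Finset.card_le_card hstep2) (le_of_eq hstep3))
    -- sum over fibers
    have hfib := Finset.card_eq_sum_card_fiberwise
      (fun p hp => Finset.mem_image_of_mem g hp : ∀ p ∈ A, g p ∈ A.image g)
    rw [hfib] at hAcard
    rw [← hAcard]
    -- split the image by membership in f
    rw [← Finset.sum_filter_add_sum_filter_not (A.image g) (fun x => x ∈ f)]
    have hpart1 : ∑ x ∈ (A.image g).filter (fun x => x ∈ f),
        (A.filter (fun p => g p = x)).card ≤ m := by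
      rw [hm]
      refine le_trans (Finset.sum_le_sum ?_)
        (Finset.sum_le_sum_of_subset (Finset.subset_univ _))
      intro x hx
      rw [Finset.mem_filter] at hx
      obtain ⟨hximg, hxf⟩ := hx
      obtain ⟨hxe, hxP, hle, hm1, -⟩ := himg x hximg
      rw [hd_mult x hxf hxP]
      exact hle
    have hpart2 : ∑ x ∈ (A.image g).filter (fun x => x ∉ f),
        (A.filter (fun p => g p = x)).card ≤ ∑ x ∈ SF, (mult x - 1) := by
      refine le_trans (Finset.sum_le_sum ?_) (Finset.sum_le_sum_of_subset ?_)
      · intro x hx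
        rw [Finset.mem_filter] at hx
        exact (himg x hx.1).2.2.1
      · intro x hx
        rw [Finset.mem_filter] at hx
        obtain ⟨hximg, hxf⟩ := hx
        obtain ⟨hxe, -, -, -, hex⟩ := himg x hximg
        rw [hSF, Finset.mem_filter]
        exact ⟨Finset.mem_univ x, hxe, hxf, hex⟩
    omega
  -- final arithmetic
  have hrsZ : (s : ℤ) = (n : ℤ) - r := by omega
  have hpairZ : (r : ℤ) * ((n : ℤ) - r) ≤ (m : ℤ) + (∑ x ∈ SF, (mult x - 1) : ℕ) := by
    rw [← hrsZ]
    exact_mod_cast hpair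
  have hTZ : (C : ℤ) + (∑ x ∈ SF, (mult x - 1) : ℕ) + 2 * n = n * (q + 1) := by
    exact_mod_cast hT
  have hmrZ : (m : ℤ) + r ≤ n := by exact_mod_cast hmr
  have hring1 : (n : ℤ) * ((q : ℤ) + 1) - 2 * n = n * ((q : ℤ) - 1) := by ring
  have hring2 : (r : ℤ) * ((n : ℤ) - r + 1) = r * ((n : ℤ) - r) + r := by ring
  have hring3 : (n : ℤ) * (q : ℤ) = n * ((q : ℤ) - 1) + n := by ring
  constructor
  · linarith
  · linarith
end

section
/- A point set S in a finite projective plane is a semi-resolving set (it resolves all lines by distances in the incidence graph) if and only if: (1) there is at most one line skew to S, and (2) through every point of S there is at most one line tangent to S. -/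
open Configuration

variable (P L : Type*) [Membership P L]

/-- A set of points is a semi-resolving set if the ordered distance lists (in the
incidence graph) to its elements distinguish all lines. -/
def IsSemiResolvingSet (S : Set P) : Prop :=
  ∀ l m : L,
    (∀ p ∈ S, (incGraph P L).dist (Sum.inr l) (Sum.inl p) =
      (incGraph P L).dist (Sum.inr m) (Sum.inl p)) → l = m

/-- A double blocking set: every line contains at least two of its points. -/
def IsDoubleBlocking (B : Set P) : Prop :=
  ∀ l : L, 2 ≤ ({p ∈ B | p ∈ l}).ncard

/-- τ₂ : the minimum size of a double blocking set. -/
noncomputable def tau2 : ℕ :=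
  sInf {n | ∃ B : Finset P, B.card = n ∧ IsDoubleBlocking P L ↑B}

/-- μ_S : the minimum size of a semi-resolving set. -/
noncomputable def muS : ℕ :=
  sInf {n | ∃ S : Finset P, S.card = n ∧ IsSemiResolvingSet P L ↑S}

section Helpers
lemma incGraph_adj {P L : Type*} [Membership P L] (p : P) (l : L) : (incGraph P L).Adj (Sum.inr l) (Sum.inl p) ↔ p ∈ l := Iff.rfl

lemma incGraph_walk_parity {P L : Type*} [Membership P L] {x y : P ⊕ L} (w : (incGraph P L).Walk x y) :
    Even w.length ↔ (x.isLeft = y.isLeft) := by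
  induction w with
  | nil => simp
  | cons h w ih =>
    rename_i a b c
    have hab : a.isLeft ≠ b.isLeft := by
      rcases a with p | l <;> rcases b with p' | l' <;> simp_all [incGraph]
    simp only [SimpleGraph.Walk.length_cons, Nat.even_add_one, ih]
    rcases a with _|_ <;> rcases b with _|_ <;> rcases c with _|_ <;> simp_all

lemma incGraph_dist_of_mem {P L : Type*} [Membership P L] {p : P} {l : L} (h : p ∈ l) :
    (incGraph P L).dist (Sum.inr l) (Sum.inl p) = 1 :=
  SimpleGraph.dist_eq_one_iff_adj.2 h

lemma exists_mem_ne {P L : Type*} [Membership P L] [ProjectivePlane P L] [Finite P] [Finite L] (l : L) (p : P) :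
    ∃ q : P, q ∈ l ∧ q ≠ p := by
  have h := ProjectivePlane.two_lt_pointCount P l
  cases nonempty_fintype { p // p ∈ l }
  rw [pointCount, Nat.card_eq_fintype_card] at h
  obtain ⟨⟨q₁, h₁⟩, ⟨q₂, h₂⟩, hne⟩ := Fintype.exists_pair_of_one_lt_card (α := { p // p ∈ l }) (by omega)
  rcases eq_or_ne q₁ p with rfl | h
  · exact ⟨q₂, h₂, fun hq => hne (by simp [hq])⟩
  · exact ⟨q₁, h₁, h⟩

lemma incGraph_dist_of_not_mem [ProjectivePlane P L] [Finite P] [Finite L]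
    {p : P} {l : L} (h : p ∉ l) :
    (incGraph P L).dist (Sum.inr l) (Sum.inl p) = 3 := by
  obtain ⟨q, hq, hqp⟩ := exists_mem_ne l p
  have hm := HasLines.mkLine_ax (L := L) hqp
  let w : (incGraph P L).Walk (Sum.inr l) (Sum.inl p) :=
    .cons (show (incGraph P L).Adj _ (Sum.inl q) from hq)
      (.cons (show (incGraph P L).Adj _ (Sum.inr (HasLines.mkLine hqp)) from hm.1)
        (.cons (show (incGraph P L).Adj _ (Sum.inl p) from hm.2) .nil))
  have hle : (incGraph P L).dist (Sum.inr l) (Sum.inl p) ≤ 3 := by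
    simpa [w] using SimpleGraph.dist_le w
  have hre : (incGraph P L).Reachable (Sum.inr l) (Sum.inl p) := ⟨w⟩
  obtain ⟨w', hw'⟩ := hre.exists_walk_length_eq_dist
  have hodd : ¬ Even ((incGraph P L).dist (Sum.inr l) (Sum.inl p)) := by
    rw [← hw']; rw [incGraph_walk_parity w']; simp
  have h1 : (incGraph P L).dist (Sum.inr l) (Sum.inl p) ≠ 1 := fun hd =>
    h (SimpleGraph.dist_eq_one_iff_adj.1 hd)
  rw [Nat.not_even_iff] at hodd
  omega

lemma incGraph_dist_iff {P L : Type*} [Membership P L] [ProjectivePlane P L] [Finite P] [Finite L]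
    (p : P) (l m : L) :
    (incGraph P L).dist (Sum.inr l) (Sum.inl p) =
      (incGraph P L).dist (Sum.inr m) (Sum.inl p) ↔ (p ∈ l ↔ p ∈ m) := by
  by_cases hl : p ∈ l <;> by_cases hm : p ∈ m <;>
    simp_all [incGraph_dist_of_mem, incGraph_dist_of_not_mem]

end Helpers

/-- a point set is a semi-resolving set iff at most one line is skew to it
and through every point of it there is at most one tangent line. -/

theorem isSemiResolvingSet_iff
    {P L : Type*} [Membership P L] [ProjectivePlane P L] [Finite P] [Finite L]
    (S : Set P) :
    IsSemiResolvingSet P L S ↔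
      ({l : L | ∀ p ∈ S, p ∉ l}).Subsingleton ∧
      (∀ p ∈ S, ({l : L | p ∈ l ∧ ({x ∈ S | x ∈ l}).ncard = 1}).Subsingleton) := by
  have key : ∀ l m : L, (∀ p ∈ S, (incGraph P L).dist (Sum.inr l) (Sum.inl p) =
      (incGraph P L).dist (Sum.inr m) (Sum.inl p)) ↔ (∀ p ∈ S, p ∈ l ↔ p ∈ m) := by
    intro l m
    constructor <;> intro h p hp <;> have := h p hp <;>
      [skip; skip] <;> rw [incGraph_dist_iff] at * <;> assumption
  constructor
  · intro hS
    constructor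
    · intro l hl m hm
      exact hS l m ((key l m).2 fun p hp => by simp [hl p hp, hm p hp])
    · intro p hp l hl m hm
      obtain ⟨a, ha⟩ := Set.ncard_eq_one.1 hl.2
      obtain ⟨b, hb⟩ := Set.ncard_eq_one.1 hm.2
      have hap : a = p := by
        have : p ∈ ({a} : Set P) := ha ▸ (show p ∈ {x ∈ S | x ∈ l} from ⟨hp, hl.1⟩)
        simpa using this.symm
      have hbp : b = p := by
        have : p ∈ ({b} : Set P) := hb ▸ (show p ∈ {x ∈ S | x ∈ m} from ⟨hp, hm.1⟩)
        simpa using this.symm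
      refine hS l m ((key l m).2 fun q hq => ?_)
      constructor
      · intro hql
        have : q ∈ ({a} : Set P) := ha ▸ (show q ∈ {x ∈ S | x ∈ l} from ⟨hq, hql⟩)
        simp only [Set.mem_singleton_iff] at this
        rw [this, hap]; exact hm.1
      · intro hqm
        have : q ∈ ({b} : Set P) := hb ▸ (show q ∈ {x ∈ S | x ∈ m} from ⟨hq, hqm⟩)
        simp only [Set.mem_singleton_iff] at this
        rw [this, hbp]; exact hl.1
  · rintro ⟨h1, h2⟩ l m hd
    have hmem : ∀ p ∈ S, (p ∈ l ↔ p ∈ m) := (key l m).1 hd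
    by_contra hne
    by_cases hex : ∃ p ∈ S, p ∈ l
    · obtain ⟨p, hp, hpl⟩ := hex
      have hpm : p ∈ m := (hmem p hp).1 hpl
      have huniq : ∀ q ∈ S, q ∈ l → q = p := by
        intro q hq hql
        have hqm : q ∈ m := (hmem q hq).1 hql
        exact (Nondegenerate.eq_or_eq hql hpl hqm hpm).resolve_right hne
      have huniqm : ∀ q ∈ S, q ∈ m → q = p := by
        intro q hq hqm
        have hql : q ∈ l := (hmem q hq).2 hqm
        exact huniq q hq hql
      have hsl : {x ∈ S | x ∈ l} = {p} := by
        ext x; simp only [Set.mem_setOf_eq, Set.mem_singleton_iff]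
        exact ⟨fun ⟨h, h'⟩ => huniq x h h', fun h => h ▸ ⟨hp, hpl⟩⟩
      have hsm : {x ∈ S | x ∈ m} = {p} := by
        ext x; simp only [Set.mem_setOf_eq, Set.mem_singleton_iff]
        exact ⟨fun ⟨h, h'⟩ => huniqm x h h', fun h => h ▸ ⟨hp, hpm⟩⟩
      exact hne (h2 p hp ⟨hpl, by rw [hsl]; simp⟩ ⟨hpm, by rw [hsm]; simp⟩)
    · push_neg at hex
      exact hne (h1 hex fun p hp hpm => hex p hp ((hmem p hp).2 hpm))
end

section
/- If B is a double blocking set in a finite projective plane and P ∈ B, then B \ {P} is a semi-resolving set; hence μ_S(Π) ≤ τ₂(Π) − 1. -/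
open Configuration

variable (P L : Type*) [Membership P L]

lemma incGraph_adj_iff {P L : Type*} [Membership P L] (l : L) (p : P) :
    (incGraph P L).Adj (Sum.inr l) (Sum.inl p) ↔ p ∈ l := Iff.rfl

lemma mem_iff_dist_eq_one {P L : Type*} [Membership P L] (l : L) (p : P) :
    p ∈ l ↔ (incGraph P L).dist (Sum.inr l) (Sum.inl p) = 1 := by
  rw [SimpleGraph.dist_eq_one_iff_adj, incGraph_adj_iff]

lemma semiResolving_aux {P L : Type*} [Membership P L] [ProjectivePlane P L] [Finite P]
    (B : Set P) (hB : IsDoubleBlocking P L B) (P₀ : P) :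
    IsSemiResolvingSet P L (B \ {P₀}) := by
  intro l m h
  have key : ∀ p ∈ B \ {P₀}, p ∈ l ↔ p ∈ m := by
    intro p hp
    have hd := h p hp
    rw [mem_iff_dist_eq_one (L := L) l p, mem_iff_dist_eq_one (L := L) m p, hd]
  -- a common point q ≠ P₀
  obtain ⟨q, hq, hqP₀⟩ := Set.exists_ne_of_one_lt_ncard (lt_of_lt_of_le one_lt_two (hB l)) P₀
  have hqS : q ∈ B \ {P₀} := ⟨hq.1, hqP₀⟩
  have hql : q ∈ l := hq.2
  have hqm : q ∈ m := (key q hqS).mp hql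
  -- a second point on l distinct from q
  obtain ⟨r, hr, hrq⟩ := Set.exists_ne_of_one_lt_ncard (lt_of_lt_of_le one_lt_two (hB l)) q
  by_cases hrP₀ : r = P₀
  · -- P₀ ∈ l; get second point on m distinct from q
    obtain ⟨s, hs, hsq⟩ := Set.exists_ne_of_one_lt_ncard (lt_of_lt_of_le one_lt_two (hB m)) q
    by_cases hsP₀ : s = P₀
    · -- P₀ ∈ m too; q and P₀ are two common points
      have hP₀l : P₀ ∈ l := hrP₀ ▸ hr.2
      have hP₀m : P₀ ∈ m := hsP₀ ▸ hs.2
      exact (Nondegenerate.eq_or_eq hql hP₀l hqm hP₀m).resolve_left hqP₀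
    · have hsS : s ∈ B \ {P₀} := ⟨hs.1, hsP₀⟩
      have hsl : s ∈ l := (key s hsS).mpr hs.2
      exact (Nondegenerate.eq_or_eq hql hsl hqm hs.2).resolve_left (Ne.symm hsq)
  · have hrS : r ∈ B \ {P₀} := ⟨hr.1, hrP₀⟩
    have hrm : r ∈ m := (key r hrS).mp hr.2
    exact (Nondegenerate.eq_or_eq hql hr.2 hqm hrm).resolve_left (Ne.symm hrq)

/-- removing a point from a double blocking set gives a semi-resolving set;
hence μ_S ≤ τ₂ - 1. -/
theorem semiResolving_of_doubleBlocking_erase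
    {P L : Type*} [Membership P L] [ProjectivePlane P L] [Finite P] [Finite L]
    (B : Set P) (hB : IsDoubleBlocking P L B) (P₀ : P) (hP₀ : P₀ ∈ B) :
    IsSemiResolvingSet P L (B \ {P₀}) ∧ muS P L ≤ tau2 P L - 1 := by
  refine ⟨semiResolving_aux B hB P₀, ?_⟩
  classical
  have : Fintype P := Fintype.ofFinite P
  -- the tau2 set is nonempty
  have hBfin : B.Finite := Set.toFinite B
  have hne : {n | ∃ B : Finset P, B.card = n ∧ IsDoubleBlocking P L ↑B}.Nonempty := by
    refine ⟨hBfin.toFinset.card, hBfin.toFinset, rfl, ?_⟩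
    rwa [Set.Finite.coe_toFinset]
  obtain ⟨B₂, hB₂card, hB₂⟩ := Nat.sInf_mem hne
  -- B₂ is nonempty: there is a line
  obtain ⟨p₁, p₂, p₃, l₁, -⟩ := ProjectivePlane.exists_config (P := P) (L := L)
  have hB₂ne : B₂.Nonempty := by
    rcases B₂.eq_empty_or_nonempty with h | h
    · exfalso
      have := hB₂ l₁
      simp [h] at this
    · exact h
  obtain ⟨P₂, hP₂⟩ := hB₂ne
  have hsemi : IsSemiResolvingSet P L ↑(B₂.erase P₂) := by
    rw [Finset.coe_erase]
    exact semiResolving_aux (↑B₂) hB₂ P₂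
  have hle : muS P L ≤ (B₂.erase P₂).card :=
    Nat.sInf_le ⟨B₂.erase P₂, rfl, hsemi⟩
  rwa [Finset.card_erase_of_mem hP₂, hB₂card] at hle
end

section
/- If a projective plane has a double blocking set B of minimum size τ₂ that is a disjoint union of two blocking sets B₁ and B₂, then removing one point from each of B₁ and B₂ yields a semi-resolving set; hence μ_S(Π) ≤ τ₂(Π) − 2. -/
open Configuration

variable (P L : Type*) [Membership P L]

/-- Auxiliary lemma: if on a line `n` every point of the blocking set `B` either lies in
`S` or equals `x`, and `l`, `m` have the same trace on `S` and share a common point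
`q ∉ B`, `q ≠ x`, then `l = m`. -/
lemma aux_two_common {P L : Type*} [Membership P L] [ProjectivePlane P L]
    {S B : Set P} (hB : ∀ l : L, ∃ p ∈ B, p ∈ l)
    {x : P} (hx : ∀ p ∈ B, p ∉ S → p = x)
    {l m : L} (htr : ∀ p ∈ S, (p ∈ l ↔ p ∈ m))
    {q : P} (hq : q ∉ B) (hqx : q ≠ x) (hql : q ∈ l) (hqm : q ∈ m) : l = m := by
  obtain ⟨p, hpB, hpl⟩ := hB l
  by_cases hpS : p ∈ S
  · have hpm := (htr p hpS).mp hpl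
    rcases Nondegenerate.eq_or_eq hql hpl hqm hpm with h | h
    · exact absurd (h ▸ hpB) hq
    · exact h
  · have hx1 : x ∈ l := hx p hpB hpS ▸ hpl
    obtain ⟨p', hp'B, hp'm⟩ := hB m
    by_cases hp'S : p' ∈ S
    · have hp'l := (htr p' hp'S).mpr hp'm
      rcases Nondegenerate.eq_or_eq hql hp'l hqm hp'm with h | h
      · exact absurd (h ▸ hp'B) hq
      · exact h
    · have hx2 : x ∈ m := hx p' hp'B hp'S ▸ hp'm
      rcases Nondegenerate.eq_or_eq hql hx1 hqm hx2 with h | h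
      · exact absurd h hqx
      · exact h

/-- if a minimum double blocking set is the disjoint union of two blocking
sets, then removing one point from each part gives a semi-resolving set; hence
μ_S ≤ τ₂ - 2. -/
theorem semiResolving_of_two_disjoint_blocking
    {P L : Type*} [Membership P L] [ProjectivePlane P L] [Finite P] [Finite L]
    (B₁ B₂ : Set P) (hdisj : Disjoint B₁ B₂)
    (hB₁ : ∀ l : L, ∃ p ∈ B₁, p ∈ l) (hB₂ : ∀ l : L, ∃ p ∈ B₂, p ∈ l)
    (hmin : (B₁ ∪ B₂).ncard = tau2 P L)
    (P₁ : P) (hP₁ : P₁ ∈ B₁) (P₂ : P) (hP₂ : P₂ ∈ B₂) :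
    IsSemiResolvingSet P L ((B₁ ∪ B₂) \ {P₁, P₂}) ∧ muS P L ≤ tau2 P L - 2 := by
  classical
  have hP12 : P₁ ≠ P₂ := fun h => Set.disjoint_left.mp hdisj hP₁ (h ▸ hP₂)
  set S : Set P := (B₁ ∪ B₂) \ {P₁, P₂} with hSdef
  have hmemS : ∀ p, p ∈ S ↔ (p ∈ B₁ ∨ p ∈ B₂) ∧ p ≠ P₁ ∧ p ≠ P₂ := by
    intro p
    simp [hSdef, Set.mem_diff, not_or]
  -- distances encode membership
  have hdist1 : ∀ (n : L) (p : P),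
      (incGraph P L).dist (Sum.inr n) (Sum.inl p) = 1 ↔ p ∈ n := by
    intro n p
    rw [SimpleGraph.dist_eq_one_iff_adj]
    exact Iff.rfl
  -- points of B₁ outside S are P₁, points of B₂ outside S are P₂
  have hxB₁ : ∀ p ∈ B₁, p ∉ S → p = P₁ := by
    intro p hp hpS
    by_contra h1
    rcases em (p = P₂) with h2 | h2
    · exact Set.disjoint_left.mp hdisj hp (h2 ▸ hP₂)
    · exact hpS ((hmemS p).mpr ⟨Or.inl hp, h1, h2⟩)
  have hxB₂ : ∀ p ∈ B₂, p ∉ S → p = P₂ := by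
    intro p hp hpS
    by_contra h2
    rcases em (p = P₁) with h1 | h1
    · exact Set.disjoint_right.mp hdisj hp (h1 ▸ hP₁)
    · exact hpS ((hmemS p).mpr ⟨Or.inr hp, h1, h2⟩)
  -- main combinatorial claim
  have key : ∀ l m : L, (∀ p ∈ S, (p ∈ l ↔ p ∈ m)) → l = m := by
    intro l m htr
    by_cases hq : ∃ q ∈ S, q ∈ l
    · obtain ⟨q, hqS, hql⟩ := hq
      have hqm : q ∈ m := (htr q hqS).mp hql
      obtain ⟨hqB, hq1, hq2⟩ := (hmemS q).mp hqS
      rcases hqB with hqB1 | hqB2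
      · exact aux_two_common hB₂ hxB₂ htr
          (fun h => Set.disjoint_left.mp hdisj hqB1 h) hq2 hql hqm
      · exact aux_two_common hB₁ hxB₁ htr
          (fun h => Set.disjoint_right.mp hdisj hqB2 h) hq1 hql hqm
    · push_neg at hq
      have hP₁l : P₁ ∈ l := by
        obtain ⟨p, hp, hpl⟩ := hB₁ l
        have : p ∉ S := fun hpS => hq p hpS hpl
        exact hxB₁ p hp this ▸ hpl
      have hP₂l : P₂ ∈ l := by
        obtain ⟨p, hp, hpl⟩ := hB₂ l
        have : p ∉ S := fun hpS => hq p hpS hpl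
        exact hxB₂ p hp this ▸ hpl
      have hqm : ∀ q ∈ S, q ∉ m := fun q hqS hqmem =>
        hq q hqS ((htr q hqS).mpr hqmem)
      have hP₁m : P₁ ∈ m := by
        obtain ⟨p, hp, hpm⟩ := hB₁ m
        have : p ∉ S := fun hpS => hqm p hpS hpm
        exact hxB₁ p hp this ▸ hpm
      have hP₂m : P₂ ∈ m := by
        obtain ⟨p, hp, hpm⟩ := hB₂ m
        have : p ∉ S := fun hpS => hqm p hpS hpm
        exact hxB₂ p hp this ▸ hpm
      rcases Nondegenerate.eq_or_eq hP₁l hP₂l hP₁m hP₂m with h | h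
      · exact absurd h hP12
      · exact h
  have hsemi : IsSemiResolvingSet P L S := by
    intro l m hd
    refine key l m fun p hp => ?_
    rw [← hdist1 l p, ← hdist1 m p, hd p hp]
  refine ⟨hsemi, ?_⟩
  -- cardinality bound
  have hSfin : S.Finite := Set.toFinite S
  have hsub : ({P₁, P₂} : Set P) ⊆ B₁ ∪ B₂ := by
    intro p hp
    rcases hp with h | h
    · exact Or.inl (h ▸ hP₁)
    · exact Or.inr (h ▸ hP₂)
  have hcard : S.ncard = tau2 P L - 2 := by
    rw [hSdef, Set.ncard_diff hsub (Set.toFinite _), Set.ncard_pair hP12, hmin]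
  have hFcard : hSfin.toFinset.card = tau2 P L - 2 := by
    rw [← Set.ncard_eq_toFinset_card S hSfin]
    exact hcard
  refine Nat.sInf_le ⟨hSfin.toFinset, hFcard, ?_⟩
  rw [Set.Finite.coe_toFinset]
  exact hsemi
end
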